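/- arXiv:1409.4503 — 6 statements merged into one kernel-verified Lean document; each statement's English description precedes it below -/
import Mathlib

section
/- Conversely, if p ∈ [0,1]^n satisfies Σ_{i ∈ M} p_i ≤ |L| for every pair (L, M) with L a subset of resources and M = OnlyAuditedBy(L), then there exist values p_i^j ≥ 0 with p_i = Σ_j p_i^j, Σ_i p_i^j ≤ 1 for each resource j, and p_i^j = 0 whenever (j,i) ∈ R. That is, the coverage vector is implementable by a feasible resource-to-target fractional assignment. -/
/-- The set of targets that can only be audited by resources in `L`
(`R j i` means resource `j` CANNOT audit target `i`). -/
def onlyAuditedBy {n k : ℕ} (R : Fin k → Fin n → Prop) [∀ j i, Decidable (R j i)]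
    (L : Finset (Fin k)) : Finset (Fin n) :=
  Finset.univ.filter fun i => ∀ j, ¬ R j i → j ∈ L

lemma hall_assignment {n k N : ℕ} (R : Fin k → Fin n → Prop) [∀ j i, Decidable (R j i)]
    (a : Fin n → ℕ)
    (h : ∀ L : Finset (Fin k), ∑ i ∈ onlyAuditedBy R L, a i ≤ N * L.card) :
    ∃ c : Fin k → Fin n → ℕ,
      (∀ i, ∑ j, c j i = a i) ∧ (∀ j, ∑ i, c j i ≤ N) ∧ (∀ j i, R j i → c j i = 0) := by
  classical
  set A : Fin n → Finset (Fin k) := fun i => Finset.univ.filter fun j => ¬ R j i with hA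
  set t : ((i : Fin n) × Fin (a i)) → Finset (Fin k × Fin N) :=
    fun x => (A x.1) ×ˢ Finset.univ with ht
  have hall : ∀ s : Finset ((i : Fin n) × Fin (a i)), s.card ≤ (s.biUnion t).card := by
    intro s
    set T : Finset (Fin n) := s.image Sigma.fst with hT
    set L' : Finset (Fin k) := T.biUnion A with hL'
    have h1 : s ⊆ T.sigma fun i => Finset.univ := by
      intro x hx
      rw [Finset.mem_sigma]
      exact ⟨Finset.mem_image.2 ⟨x, hx, rfl⟩, Finset.mem_univ _⟩
    have hcard1 : s.card ≤ ∑ i ∈ T, a i := by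
      calc s.card ≤ (T.sigma fun i => (Finset.univ : Finset (Fin (a i)))).card :=
            Finset.card_le_card h1
        _ = ∑ i ∈ T, a i := by simp [Finset.card_sigma]
    have hTM : T ⊆ onlyAuditedBy R L' := by
      intro i hi
      simp only [onlyAuditedBy, Finset.mem_filter, Finset.mem_univ, true_and]
      intro j hj
      exact Finset.mem_biUnion.2 ⟨i, hi, by simp [hA, hj]⟩
    have hcard2 : ∑ i ∈ T, a i ≤ ∑ i ∈ onlyAuditedBy R L', a i :=
      Finset.sum_le_sum_of_subset hTM
    have hbi : s.biUnion t = L' ×ˢ (Finset.univ : Finset (Fin N)) := by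
      ext ⟨j, u⟩
      simp only [Finset.mem_biUnion, ht, Finset.mem_product, Finset.mem_univ, and_true,
        hL', hT, Finset.mem_image]
      constructor
      · rintro ⟨x, hx, hj⟩
        exact ⟨x.1, ⟨x, hx, rfl⟩, hj⟩
      · rintro ⟨i, ⟨x, hx, rfl⟩, hj⟩
        exact ⟨x, hx, hj⟩
    calc s.card ≤ ∑ i ∈ onlyAuditedBy R L', a i := hcard1.trans hcard2
      _ ≤ N * L'.card := h L'
      _ = (s.biUnion t).card := by
          rw [hbi, Finset.card_product]
          simp [mul_comm]
  obtain ⟨f, hinj, hmem⟩ := (Finset.all_card_le_biUnion_card_iff_exists_injective t).1 hall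
  refine ⟨fun j i => ((Finset.univ : Finset (Fin (a i))).filter fun u => (f ⟨i, u⟩).1 = j).card,
    ?_, ?_, ?_⟩
  · intro i
    have := Finset.card_eq_sum_card_fiberwise
      (f := fun u : Fin (a i) => (f ⟨i, u⟩).1) (s := Finset.univ) (t := Finset.univ)
      (fun x _ => Finset.mem_univ _)
    simpa using this.symm
  · intro j
    set S : Finset ((i : Fin n) × Fin (a i)) :=
      Finset.univ.filter fun x => (f x).1 = j with hS
    have hfib : ∀ i, (S.filter fun x => x.1 = i).card
        = ((Finset.univ : Finset (Fin (a i))).filter fun u => (f ⟨i, u⟩).1 = j).card := by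
      intro i
      have himg : S.filter (fun x => x.1 = i)
          = ((Finset.univ : Finset (Fin (a i))).filter fun u => (f ⟨i, u⟩).1 = j).image
            (fun u => (⟨i, u⟩ : (i : Fin n) × Fin (a i))) := by
        ext ⟨i', u⟩
        simp only [hS, Finset.mem_filter, Finset.mem_univ, true_and, Finset.mem_image]
        constructor
        · rintro ⟨hj, rfl⟩
          exact ⟨u, hj, rfl⟩
        · rintro ⟨u', hju', heq⟩
          cases heq
          exact ⟨hju', rfl⟩
      rw [himg, Finset.card_image_of_injective _ sigma_mk_injective]
    have hSsum : S.card = ∑ i, (S.filter fun x => x.1 = i).card :=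
      Finset.card_eq_sum_card_fiberwise (fun x _ => Finset.mem_univ _)
    have hScard : S.card ≤ N := by
      have : S.card ≤ (Finset.univ : Finset (Fin N)).card := by
        apply Finset.card_le_card_of_injOn (fun x => (f x).2) (fun x _ => Finset.mem_univ _)
        intro x hx y hy hxy
        rw [hS, Finset.mem_coe, Finset.mem_filter] at hx hy
        apply hinj
        exact Prod.ext (hx.2.trans hy.2.symm) hxy
      simpa using this
    calc ∑ i, ((Finset.univ : Finset (Fin (a i))).filter fun u => (f ⟨i, u⟩).1 = j).card
        = ∑ i, (S.filter fun x => x.1 = i).card := by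
          exact Finset.sum_congr rfl fun i _ => (hfib i).symm
      _ = S.card := hSsum.symm
      _ ≤ N := hScard
  · intro j i hR
    rw [Finset.card_eq_zero, Finset.filter_eq_empty_iff]
    intro u _
    have := hmem ⟨i, u⟩
    rw [ht, Finset.mem_product] at this
    have h1 : (f ⟨i, u⟩).1 ∈ A i := this.1
    rw [hA] at h1
    simp only [Finset.mem_filter] at h1
    intro heq
    exact h1.2 (heq ▸ hR)


/-- Marginals satisfying all `OnlyAuditedBy` constraints are implementable by a
feasible fractional resource-to-target assignment. -/
theorem stmt3 {n k : ℕ} (R : Fin k → Fin n → Prop) [∀ j i, Decidable (R j i)]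
    (p : Fin n → ℝ)
    (hp : ∀ i, 0 ≤ p i ∧ p i ≤ 1)
    (hC : ∀ L : Finset (Fin k), ∑ i ∈ onlyAuditedBy R L, p i ≤ (L.card : ℝ)) :
    ∃ q : Fin k → Fin n → ℝ,
      (∀ j i, 0 ≤ q j i) ∧
      (∀ i, p i = ∑ j, q j i) ∧
      (∀ j, ∑ i, q j i ≤ 1) ∧
      (∀ j i, R j i → q j i = 0) := by
  have hall : ∀ (N : ℕ) (a : Fin n → ℕ), (∀ i, (a i : ℝ) ≤ p i * N) →
      ∃ c : Fin k → Fin n → ℕ,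
        (∀ i, ∑ j, c j i = a i) ∧ (∀ j, ∑ i, c j i ≤ N) ∧ (∀ j i, R j i → c j i = 0) := by
    intro N a ha
    apply hall_assignment R a
    intro L
    have key : ((∑ i ∈ onlyAuditedBy R L, a i : ℕ) : ℝ) ≤ ((N * L.card : ℕ) : ℝ) := by
      push_cast
      calc ∑ i ∈ onlyAuditedBy R L, (a i : ℝ)
          ≤ ∑ i ∈ onlyAuditedBy R L, p i * N := Finset.sum_le_sum fun i _ => ha i
        _ = (∑ i ∈ onlyAuditedBy R L, p i) * N := by rw [← Finset.sum_mul]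
        _ ≤ (L.card : ℝ) * N := mul_le_mul_of_nonneg_right (hC L) (by positivity)
        _ = (N : ℝ) * L.card := mul_comm _ _
    exact_mod_cast key

  classical
  set φ : (Fin k → Fin n → ℝ) → (Fin n → ℝ) := fun q i => ∑ j, q j i with hφ
  have hφc : Continuous φ := continuous_pi fun i =>
    continuous_finset_sum _ fun j _ => (continuous_apply i).comp (continuous_apply j)
  set K : Set (Fin k → Fin n → ℝ) :=
    {q | (∀ j i, 0 ≤ q j i) ∧ (∀ j, ∑ i, q j i ≤ 1) ∧ (∀ j i, R j i → q j i = 0)} with hK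
  have hKclosed : IsClosed K := by
    have hrw : K = (⋂ j, ⋂ i, {q : Fin k → Fin n → ℝ | 0 ≤ q j i}) ∩
        ((⋂ j, {q : Fin k → Fin n → ℝ | ∑ i, q j i ≤ 1}) ∩
          (⋂ j, ⋂ i, {q : Fin k → Fin n → ℝ | R j i → q j i = 0})) := by
      ext q
      simp only [hK, Set.mem_inter_iff, Set.mem_iInter, Set.mem_setOf_eq]
    rw [hrw]
    refine IsClosed.inter (isClosed_iInter fun j => isClosed_iInter fun i =>
        isClosed_le continuous_const ((continuous_apply i).comp (continuous_apply j)))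
      (IsClosed.inter (isClosed_iInter fun j => isClosed_le
        (continuous_finset_sum _ fun i _ => (continuous_apply i).comp (continuous_apply j))
        continuous_const)
        (isClosed_iInter fun j => isClosed_iInter fun i => ?_))
    by_cases hR : R j i
    · have : {q : Fin k → Fin n → ℝ | R j i → q j i = 0} = {q | q j i = 0} := by
        ext q; simp [hR]
      rw [this]
      exact isClosed_eq ((continuous_apply i).comp (continuous_apply j)) continuous_const
    · have : {q : Fin k → Fin n → ℝ | R j i → q j i = 0} = Set.univ := by
        ext q; simp [hR]
      rw [this]; exact isClosed_univ
  have hKcompact : IsCompact K := by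
    refine IsCompact.of_isClosed_subset (isCompact_univ_pi fun j =>
      isCompact_univ_pi fun i => isCompact_Icc (a := (0:ℝ)) (b := 1)) hKclosed ?_
    intro q hq
    rw [Set.mem_univ_pi]
    intro j
    rw [Set.mem_univ_pi]
    intro i
    refine ⟨hq.1 j i, ?_⟩
    calc q j i ≤ ∑ i', q j i' :=
          Finset.single_le_sum (fun i' _ => hq.1 j i') (Finset.mem_univ i)
      _ ≤ 1 := hq.2.1 j
  have hD : IsClosed (φ '' K) := (hKcompact.image hφc).isClosed
  -- the approximating sequence
  have hmem : p ∈ φ '' K := by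
    have hchoice : ∀ m : ℕ, ∃ c : Fin k → Fin n → ℕ,
        (∀ i, ∑ j, c j i = ⌊p i * (m + 1 : ℕ)⌋₊) ∧ (∀ j, ∑ i, c j i ≤ m + 1) ∧
        (∀ j i, R j i → c j i = 0) := by
      intro m
      exact hall (m + 1) (fun i => ⌊p i * (m + 1 : ℕ)⌋₊) (fun i =>
        Nat.floor_le (mul_nonneg (hp i).1 (by positivity)))
    choose c hc1 hc2 hc3 using hchoice
    set Q : ℕ → (Fin k → Fin n → ℝ) := fun m j i => (c m j i : ℝ) / (m + 1 : ℕ) with hQ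
    have hQK : ∀ m, Q m ∈ K := by
      intro m
      refine ⟨fun j i => by positivity, fun j => ?_, fun j i hR => by simp [hQ, hc3 m j i hR]⟩
      rw [← Finset.sum_div]
      rw [div_le_one (by positivity)]
      exact_mod_cast hc2 m j
    have hφQ : ∀ m i, φ (Q m) i = (⌊p i * (m + 1 : ℕ)⌋₊ : ℝ) / (m + 1 : ℕ) := by
      intro m i
      rw [hφ]
      simp only [hQ]
      rw [← Finset.sum_div]
      congr 1
      exact_mod_cast congrArg (Nat.cast (R := ℝ)) (hc1 m i)
    have htend : Filter.Tendsto (fun m => φ (Q m)) Filter.atTop (nhds p) := by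
      rw [tendsto_pi_nhds]
      intro i
      have hlow : ∀ m : ℕ, p i - 1 / (m + 1 : ℝ) ≤ φ (Q m) i := by
        intro m
        rw [hφQ m i]
        have h1 : p i * ((m + 1 : ℕ) : ℝ) < (⌊p i * ((m + 1 : ℕ) : ℝ)⌋₊ : ℝ) + 1 :=
          Nat.lt_floor_add_one _
        have hpos : (0:ℝ) < ((m + 1 : ℕ) : ℝ) := by positivity
        rw [le_div_iff₀ hpos]
        push_cast at h1 ⊢
        have key : (p i - 1 / ((m:ℝ) + 1)) * ((m:ℝ) + 1) = p i * ((m:ℝ) + 1) - 1 := by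
          field_simp
        rw [key]
        linarith
      have hhigh : ∀ m : ℕ, φ (Q m) i ≤ p i := by
        intro m
        rw [hφQ m i]
        have hpos : (0:ℝ) < ((m + 1 : ℕ) : ℝ) := by positivity
        rw [div_le_iff₀ hpos]
        exact Nat.floor_le (mul_nonneg (hp i).1 (by positivity))
      refine tendsto_of_tendsto_of_tendsto_of_le_of_le ?_ tendsto_const_nhds hlow hhigh
      have := tendsto_one_div_add_atTop_nhds_zero_nat (𝕜 := ℝ)
      have h2 : Filter.Tendsto (fun m : ℕ => p i - 1 / ((m : ℝ) + 1)) Filter.atTop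
          (nhds (p i - 0)) := tendsto_const_nhds.sub this
      simpa using h2
    exact hD.mem_of_tendsto htend (Filter.Eventually.of_forall fun m => ⟨Q m, hQK m, rfl⟩)
  obtain ⟨q, hqK, hqp⟩ := hmem
  exact ⟨q, hqK.1, fun i => by rw [← hqp], hqK.2.1, hqK.2.2⟩
end

section
/- Every extreme point of the polytope C⁺ ⊆ ℝ^n defined by 0 ≤ p_i ≤ 1 for all i and constraints of the form Σ_{i ∈ M_c} p_i ≤ b_c (for a family of constraints indexed by c with M_c ⊆ {1,...,n}, b_c ∈ ℕ) arising from the OnlyAuditedBy construction (including the redundant constraints with |L| ≥ |M|) has all coordinates equal to 0 or 1. -/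
namespace Stmt4Aux

variable {n k : ℕ} (R : Fin k → Fin n → Prop) [∀ j i, Decidable (R j i)]

lemma oab_mono {L L' : Finset (Fin k)} (h : L ⊆ L') :
    onlyAuditedBy R L ⊆ onlyAuditedBy R L' := by
  intro i hi
  simp only [onlyAuditedBy, Finset.mem_filter, Finset.mem_univ, true_and] at hi ⊢
  exact fun j hj => h (hi j hj)

lemma oab_inter (L L' : Finset (Fin k)) :
    onlyAuditedBy R (L ∩ L') = onlyAuditedBy R L ∩ onlyAuditedBy R L' := by
  ext i
  simp only [onlyAuditedBy, Finset.mem_filter, Finset.mem_univ, true_and, Finset.mem_inter]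
  constructor
  · intro h
    exact ⟨fun j hj => (h j hj).1, fun j hj => (h j hj).2⟩
  · intro ⟨h1, h2⟩ j hj
    exact ⟨h1 j hj, h2 j hj⟩

/-- Tight constraint sets are closed under intersection. -/
lemma tight_inter (p : Fin n → ℝ) (hpos : ∀ i, 0 ≤ p i)
    (hfeas : ∀ L : Finset (Fin k), ∑ i ∈ onlyAuditedBy R L, p i ≤ (L.card : ℝ))
    {L L' : Finset (Fin k)}
    (hL : ∑ i ∈ onlyAuditedBy R L, p i = (L.card : ℝ))
    (hL' : ∑ i ∈ onlyAuditedBy R L', p i = (L'.card : ℝ)) :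
    ∑ i ∈ onlyAuditedBy R (L ∩ L'), p i = ((L ∩ L').card : ℝ) := by
  have hsum : ∑ i ∈ onlyAuditedBy R L ∪ onlyAuditedBy R L', p i
      + ∑ i ∈ onlyAuditedBy R L ∩ onlyAuditedBy R L', p i
      = ∑ i ∈ onlyAuditedBy R L, p i + ∑ i ∈ onlyAuditedBy R L', p i :=
    Finset.sum_union_inter
  have hsub : onlyAuditedBy R L ∪ onlyAuditedBy R L' ⊆ onlyAuditedBy R (L ∪ L') :=
    Finset.union_subset (oab_mono R Finset.subset_union_left)
      (oab_mono R Finset.subset_union_right)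
  have hle : ∑ i ∈ onlyAuditedBy R L ∪ onlyAuditedBy R L', p i
      ≤ ∑ i ∈ onlyAuditedBy R (L ∪ L'), p i :=
    Finset.sum_le_sum_of_subset_of_nonneg hsub (fun i _ _ => hpos i)
  have hfeasU := hfeas (L ∪ L')
  have hfeasI := hfeas (L ∩ L')
  have hcards : ((L ∪ L').card : ℝ) + ((L ∩ L').card : ℝ) = (L.card : ℝ) + (L'.card : ℝ) := by
    have := Finset.card_union_add_card_inter L L'
    exact_mod_cast congrArg (Nat.cast : ℕ → ℝ) this
  rw [oab_inter] at hfeasI ⊢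
  linarith

/-- Sums of 0/1 reals are integers. -/
lemma sum_int {α : Type*} {s : Finset α} {f : α → ℝ} (h : ∀ j ∈ s, f j = 0 ∨ f j = 1) :
    ∃ m : ℤ, ∑ j ∈ s, f j = (m : ℝ) := by
  classical
  induction s using Finset.induction_on with
  | empty => exact ⟨0, by simp⟩
  | @insert a s ha ih =>
    obtain ⟨m, hm⟩ := ih (fun j hj => h j (Finset.mem_insert_of_mem hj))
    rcases h a (Finset.mem_insert_self a s) with h0 | h1
    · exact ⟨m, by rw [Finset.sum_insert ha, h0, hm]; ring⟩
    · exact ⟨m + 1, by rw [Finset.sum_insert ha, h1, hm]; push_cast; ring⟩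

/-- In a tight constraint containing a fractional coordinate, there is a second
fractional coordinate. -/
lemma exists_second (p : Fin n → ℝ) (hbd : ∀ i, 0 ≤ p i ∧ p i ≤ 1)
    {L : Finset (Fin k)} (hL : ∑ i ∈ onlyAuditedBy R L, p i = (L.card : ℝ))
    {i0 : Fin n} (hi0 : i0 ∈ onlyAuditedBy R L) (hfr : p i0 ≠ 0 ∧ p i0 ≠ 1) :
    ∃ i1 ∈ onlyAuditedBy R L, i1 ≠ i0 ∧ p i1 ≠ 0 ∧ p i1 ≠ 1 := by
  by_contra hcon
  push_neg at hcon
  have hall : ∀ j ∈ (onlyAuditedBy R L).erase i0, p j = 0 ∨ p j = 1 := by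
    intro j hj
    have hjm := Finset.mem_of_mem_erase hj
    have hjne := Finset.ne_of_mem_erase hj
    by_contra hj'
    push_neg at hj'
    exact hj'.2 (hcon j hjm hjne hj'.1)
  obtain ⟨m, hm⟩ := sum_int hall
  have hsplit : p i0 + ∑ j ∈ (onlyAuditedBy R L).erase i0, p j
      = ∑ j ∈ onlyAuditedBy R L, p j := Finset.add_sum_erase _ _ hi0
  have hpz : p i0 = ((L.card : ℤ) - m : ℤ) := by push_cast; linarith
  have h0 : (0 : ℝ) ≤ (((L.card : ℤ) - m : ℤ) : ℝ) := hpz ▸ (hbd i0).1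
  have h1 : (((L.card : ℤ) - m : ℤ) : ℝ) ≤ 1 := hpz ▸ (hbd i0).2
  have h0' : (0 : ℤ) ≤ (L.card : ℤ) - m := by exact_mod_cast h0
  have h1' : (L.card : ℤ) - m ≤ 1 := by exact_mod_cast h1
  have hcases : (L.card : ℤ) - m = 0 ∨ (L.card : ℤ) - m = 1 := by omega
  rcases hcases with h | h
  · exact hfr.1 (by rw [hpz, h]; norm_num)
  · exact hfr.2 (by rw [hpz, h]; norm_num)

/-- The perturbation lemma: a nonzero direction supported on fractional
coordinates with zero sum on every tight constraint contradicts extremality. -/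
lemma not_extreme_of_pert (p d : Fin n → ℝ)
    (hbd : ∀ i, 0 ≤ p i ∧ p i ≤ 1)
    (hfeas : ∀ L : Finset (Fin k), ∑ i ∈ onlyAuditedBy R L, p i ≤ (L.card : ℝ))
    (hsupp : ∀ i, d i ≠ 0 → p i ≠ 0 ∧ p i ≠ 1)
    (htight : ∀ L : Finset (Fin k), ∑ i ∈ onlyAuditedBy R L, p i = (L.card : ℝ) →
        ∑ i ∈ onlyAuditedBy R L, d i = 0)
    (hd : d ≠ 0) :
    p ∉ Set.extremePoints ℝ
      {q : Fin n → ℝ | (∀ i, 0 ≤ q i ∧ q i ≤ 1) ∧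
        ∀ L : Finset (Fin k), ∑ i ∈ onlyAuditedBy R L, q i ≤ (L.card : ℝ)} := by
  classical
  intro hp
  obtain ⟨i₀, hi₀⟩ : ∃ i, d i ≠ 0 := by
    by_contra h
    push_neg at h
    exact hd (funext h)
  haveI : Nonempty (Fin n) := ⟨i₀⟩
  set D : ℝ := 1 + ∑ i, |d i| with hD_def
  have hDpos : 0 < D := by
    have : (0 : ℝ) ≤ ∑ i, |d i| := Finset.sum_nonneg fun i _ => abs_nonneg _
    simp only [hD_def]; linarith
  have hDd : ∀ i, |d i| ≤ D := by
    intro i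
    have h1 : |d i| ≤ ∑ j, |d j| :=
      Finset.single_le_sum (f := fun j => |d j|) (fun j _ => abs_nonneg _) (Finset.mem_univ i)
    simp only [hD_def]; linarith
  have hDsum : ∀ M : Finset (Fin n), |∑ i ∈ M, d i| ≤ D := by
    intro M
    calc |∑ i ∈ M, d i| ≤ ∑ i ∈ M, |d i| := Finset.abs_sum_le_sum_abs _ _
      _ ≤ ∑ i, |d i| :=
        Finset.sum_le_sum_of_subset_of_nonneg (Finset.subset_univ M) (fun i _ _ => abs_nonneg _)
      _ ≤ D := by simp only [hD_def]; linarith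
  set εa : ℝ := Finset.univ.inf' Finset.univ_nonempty
    (fun i => if d i = 0 then 1 else min (p i) (1 - p i) / D) with hεa_def
  set εb : ℝ := (Finset.univ : Finset (Finset (Fin k))).inf' Finset.univ_nonempty
    (fun L => if ∑ i ∈ onlyAuditedBy R L, d i = 0 then 1
      else ((L.card : ℝ) - ∑ i ∈ onlyAuditedBy R L, p i) / D) with hεb_def
  set ε : ℝ := min εa εb with hε_def
  have hεa_pos : 0 < εa := by
    rw [hεa_def, Finset.lt_inf'_iff]
    intro i _
    by_cases h : d i = 0
    · simp [h]
    · have hfr := hsupp i h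
      have hb := hbd i
      have h0 : 0 < p i := lt_of_le_of_ne hb.1 (Ne.symm hfr.1)
      have h1 : p i < 1 := lt_of_le_of_ne hb.2 hfr.2
      simp only [h, if_false]
      exact div_pos (lt_min h0 (by linarith)) hDpos
  have hεb_pos : 0 < εb := by
    rw [hεb_def, Finset.lt_inf'_iff]
    intro L _
    by_cases h : ∑ i ∈ onlyAuditedBy R L, d i = 0
    · simp [h]
    · have hne : ∑ i ∈ onlyAuditedBy R L, p i ≠ (L.card : ℝ) := fun hc => h (htight L hc)
      have hlt : ∑ i ∈ onlyAuditedBy R L, p i < (L.card : ℝ) := lt_of_le_of_ne (hfeas L) hne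
      simp only [h, if_false]
      exact div_pos (by linarith) hDpos
  have hεpos : 0 < ε := lt_min hεa_pos hεb_pos
  -- feasibility of p ± ε d
  have hmem : ∀ σ : ℝ, |σ| = 1 → (fun i => p i + σ * ε * d i) ∈
      {q : Fin n → ℝ | (∀ i, 0 ≤ q i ∧ q i ≤ 1) ∧
        ∀ L : Finset (Fin k), ∑ i ∈ onlyAuditedBy R L, q i ≤ (L.card : ℝ)} := by
    intro σ hσ
    constructor
    · intro i
      by_cases h : d i = 0
      · simp [h, hbd i]
      · have hfr := hsupp i h
        have hb := hbd i
        have h0 : 0 < p i := lt_of_le_of_ne hb.1 (Ne.symm hfr.1)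
        have h1 : p i < 1 := lt_of_le_of_ne hb.2 hfr.2
        have hεle : ε ≤ min (p i) (1 - p i) / D := by
          have := Finset.inf'_le (b := i)
            (fun i => if d i = 0 then (1:ℝ) else min (p i) (1 - p i) / D) (Finset.mem_univ i)
          simp only [h, if_false] at this
          exact le_trans (min_le_left _ _) this
        have habs : |σ * ε * d i| ≤ min (p i) (1 - p i) := by
          rw [abs_mul, abs_mul, hσ, one_mul, abs_of_pos hεpos]
          calc ε * |d i| ≤ (min (p i) (1 - p i) / D) * D := by
                apply mul_le_mul hεle (hDd i) (abs_nonneg _)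
                exact div_nonneg (le_min (le_of_lt h0) (by linarith)) (le_of_lt hDpos)
            _ = min (p i) (1 - p i) := div_mul_cancel₀ _ (ne_of_gt hDpos)
        obtain ⟨ha1, ha2⟩ := abs_le.1 habs
        have hm1 := min_le_left (p i) (1 - p i)
        have hm2 := min_le_right (p i) (1 - p i)
        constructor
        · simp only []; linarith
        · simp only []; linarith
    · intro L
      have hsplit : ∑ i ∈ onlyAuditedBy R L, (p i + σ * ε * d i)
          = ∑ i ∈ onlyAuditedBy R L, p i + σ * ε * ∑ i ∈ onlyAuditedBy R L, d i := by
        rw [Finset.sum_add_distrib, Finset.mul_sum]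
      by_cases h : ∑ i ∈ onlyAuditedBy R L, d i = 0
      · simp only [hsplit, h, mul_zero, add_zero]
        exact hfeas L
      · have hεle : ε ≤ ((L.card : ℝ) - ∑ i ∈ onlyAuditedBy R L, p i) / D := by
          have := Finset.inf'_le (b := L)
            (fun L => if ∑ i ∈ onlyAuditedBy R L, d i = 0 then (1:ℝ)
              else ((L.card : ℝ) - ∑ i ∈ onlyAuditedBy R L, p i) / D) (Finset.mem_univ L)
          simp only [h, if_false] at this
          exact le_trans (min_le_right _ _) this
        have hslack : 0 < (L.card : ℝ) - ∑ i ∈ onlyAuditedBy R L, p i := by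
          have hne : ∑ i ∈ onlyAuditedBy R L, p i ≠ (L.card : ℝ) := fun hc => h (htight L hc)
          have := lt_of_le_of_ne (hfeas L) hne
          linarith
        have habs : |σ * ε * ∑ i ∈ onlyAuditedBy R L, d i|
            ≤ (L.card : ℝ) - ∑ i ∈ onlyAuditedBy R L, p i := by
          rw [abs_mul, abs_mul, hσ, one_mul, abs_of_pos hεpos]
          calc ε * |∑ i ∈ onlyAuditedBy R L, d i|
              ≤ (((L.card : ℝ) - ∑ i ∈ onlyAuditedBy R L, p i) / D) * D := by
                apply mul_le_mul hεle (hDsum _) (abs_nonneg _)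
                exact div_nonneg (le_of_lt hslack) (le_of_lt hDpos)
            _ = (L.card : ℝ) - ∑ i ∈ onlyAuditedBy R L, p i :=
                div_mul_cancel₀ _ (ne_of_gt hDpos)
        have := abs_le.1 habs
        simp only [hsplit]
        linarith [this.2]
  set x : Fin n → ℝ := fun i => p i + (-1) * ε * d i with hx_def
  set y : Fin n → ℝ := fun i => p i + 1 * ε * d i with hy_def
  have hxS := hmem (-1) (by norm_num)
  have hyS := hmem 1 (by norm_num)
  have hseg : p ∈ openSegment ℝ x y := by
    refine ⟨1/2, 1/2, by norm_num, by norm_num, by norm_num, ?_⟩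
    funext i
    simp only [hx_def, hy_def, Pi.add_apply, Pi.smul_apply, smul_eq_mul]
    ring
  obtain ⟨hx_eq, _⟩ := (mem_extremePoints.1 hp).2 _ hxS _ hyS hseg
  have : x i₀ = p i₀ := congrFun hx_eq i₀
  simp only [hx_def] at this
  have : ε * d i₀ = 0 := by linarith
  rcases mul_eq_zero.1 this with h | h
  · exact absurd h (ne_of_gt hεpos)
  · exact hi₀ h

end Stmt4Aux

/-- Every extreme point of the polytope `C⁺` (unit cube intersected with all
`OnlyAuditedBy` constraints, the redundant ones included) is a 0/1 vector. -/
theorem stmt4 {n k : ℕ} (R : Fin k → Fin n → Prop) [∀ j i, Decidable (R j i)]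
    (p : Fin n → ℝ)
    (hp : p ∈ Set.extremePoints ℝ
      {q : Fin n → ℝ | (∀ i, 0 ≤ q i ∧ q i ≤ 1) ∧
        ∀ L : Finset (Fin k), ∑ i ∈ onlyAuditedBy R L, q i ≤ (L.card : ℝ)}) :
    ∀ i, p i = 0 ∨ p i = 1 := by
  classical
  by_contra hcon
  push_neg at hcon
  obtain ⟨i0, hfr0⟩ := hcon
  obtain ⟨hbd, hfeas⟩ := hp.1
  by_cases hB : ∃ (i : Fin n) (L : Finset (Fin k)), (p i ≠ 0 ∧ p i ≠ 1) ∧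
      (∑ j ∈ onlyAuditedBy R L, p j = (L.card : ℝ)) ∧ i ∈ onlyAuditedBy R L
  · -- Case B: some fractional coordinate lies in a tight constraint.
    set T : Set ℕ := {c | ∃ (i : Fin n) (L : Finset (Fin k)), (p i ≠ 0 ∧ p i ≠ 1) ∧
      (∑ j ∈ onlyAuditedBy R L, p j = (L.card : ℝ)) ∧ i ∈ onlyAuditedBy R L ∧ L.card = c}
      with hT_def
    have hTne : T.Nonempty := by
      obtain ⟨i, L, h1, h2, h3⟩ := hB
      exact ⟨L.card, i, L, h1, h2, h3, rfl⟩
    obtain ⟨ia, L0, hfra, htL0, hmema, hcard⟩ := Nat.sInf_mem hTne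
    obtain ⟨ib, hmemb, hneb, hfrb⟩ :=
      Stmt4Aux.exists_second R p hbd htL0 hmema hfra
    set d : Fin n → ℝ := fun i => if i = ia then 1 else if i = ib then -1 else 0 with hd_def
    -- the minimal tight set L0 is contained in every tight set whose constraint
    -- contains ia or ib
    have hmin : ∀ (j : Fin n) (L : Finset (Fin k)), (p j ≠ 0 ∧ p j ≠ 1) →
        (∑ x ∈ onlyAuditedBy R L, p x = (L.card : ℝ)) → j ∈ onlyAuditedBy R L →
        j ∈ onlyAuditedBy R L0 → L0 ⊆ L := by
      intro j L hfrj htL hjL hjL0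
      have htI := Stmt4Aux.tight_inter R p (fun i => (hbd i).1) hfeas htL htL0
      have hjI : j ∈ onlyAuditedBy R (L ∩ L0) := by
        rw [Stmt4Aux.oab_inter]
        exact Finset.mem_inter.2 ⟨hjL, hjL0⟩
      have hmemT : (L ∩ L0).card ∈ T := ⟨j, L ∩ L0, hfrj, htI, hjI, rfl⟩
      have h1 : sInf T ≤ (L ∩ L0).card := Nat.sInf_le hmemT
      have h2 : (L ∩ L0).card ≤ L0.card := Finset.card_le_card Finset.inter_subset_right
      have heq : L ∩ L0 = L0 :=
        Finset.eq_of_subset_of_card_le Finset.inter_subset_right (by omega)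
      intro x hx
      have : x ∈ L ∩ L0 := by rw [heq]; exact hx
      exact (Finset.mem_inter.1 this).1
    have hiff : ∀ L : Finset (Fin k), (∑ x ∈ onlyAuditedBy R L, p x = (L.card : ℝ)) →
        (ia ∈ onlyAuditedBy R L ↔ ib ∈ onlyAuditedBy R L) := by
      intro L htL
      constructor
      · intro hia
        exact Stmt4Aux.oab_mono R (hmin ia L hfra htL hia hmema) hmemb
      · intro hib
        exact Stmt4Aux.oab_mono R (hmin ib L hfrb htL hib hmemb) hmema
    have hne' : ia ≠ ib := fun h => hneb h.symm
    refine Stmt4Aux.not_extreme_of_pert R p d hbd hfeas ?_ ?_ ?_ hp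
    · intro i hdi
      by_cases h1 : i = ia
      · exact h1 ▸ hfra
      · by_cases h2 : i = ib
        · exact h2 ▸ hfrb
        · exfalso; apply hdi; simp [hd_def, h1, h2]
    · intro L htL
      have hsum : ∑ i ∈ onlyAuditedBy R L, d i
          = (if ia ∈ onlyAuditedBy R L then (1:ℝ) else 0)
            + (if ib ∈ onlyAuditedBy R L then (-1:ℝ) else 0) := by
        have : ∀ i ∈ onlyAuditedBy R L, d i
            = (if i = ia then (1:ℝ) else 0) + (if i = ib then (-1:ℝ) else 0) := by
          intro i _
          by_cases h1 : i = ia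
          · subst h1
            simp [hd_def, hne']
          · by_cases h2 : i = ib
            · subst h2
              simp [hd_def, h1]
            · simp [hd_def, h1, h2]
        rw [Finset.sum_congr rfl this, Finset.sum_add_distrib,
          Finset.sum_ite_eq' _ ia (fun _ => (1:ℝ)), Finset.sum_ite_eq' _ ib (fun _ => (-1:ℝ))]
      rw [hsum]
      by_cases h : ia ∈ onlyAuditedBy R L
      · have hb := (hiff L htL).1 h
        simp [h, hb]
      · have hb : ib ∉ onlyAuditedBy R L := fun hb => h ((hiff L htL).2 hb)
        simp [h, hb]
    · intro h
      have : d ia = 0 := congrFun h ia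
      simp [hd_def] at this
  · -- Case A: no fractional coordinate lies in any tight constraint.
    push_neg at hB
    set d : Fin n → ℝ := fun i => if i = i0 then 1 else 0 with hd_def
    refine Stmt4Aux.not_extreme_of_pert R p d hbd hfeas ?_ ?_ ?_ hp
    · intro i hdi
      by_cases h1 : i = i0
      · exact h1 ▸ hfr0
      · exfalso; apply hdi; simp [hd_def, h1]
    · intro L htL
      have hni : i0 ∉ onlyAuditedBy R L := fun hmem => by
        have := hB i0 L hfr0 htL
        exact this hmem
      rw [show (∑ i ∈ onlyAuditedBy R L, d i)
          = ∑ i ∈ onlyAuditedBy R L, (if i = i0 then (1:ℝ) else 0) from rfl,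
        Finset.sum_ite_eq' _ i0 (fun _ => (1:ℝ))]
      simp [hni]
    · intro h
      have : d i0 = 0 := congrFun h i0
      simp [hd_def] at this
end

section
/- Let T(n, d, t) denote the maximum number of connected induced subgraphs over all graphs with n vertices, maximum degree at most d, and at most t vertices of degree ≥ 3. Then T(n, d, t) ≤ 2^{(2(d+1))^{t+1}} · n^{(d+1)^{t+1}}. In particular, for fixed constants d and t, the number of connected induced subgraphs is polynomial in n. -/
open SimpleGraph
set_option linter.unusedSectionVars false
set_option linter.unreachableTactic false
set_option linter.unusedTactic false

section Infra
variable {V : Type*} [DecidableEq V] {G : SimpleGraph V}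

/-- Reachability within a finset, via ambient walks. -/
def ReachIn (G : SimpleGraph V) (S : Finset V) (x y : V) : Prop :=
  ∃ p : G.Walk x y, ∀ z ∈ p.support, z ∈ S

/-- Connectivity of a finset via ambient walks. -/
def ConnW (G : SimpleGraph V) (S : Finset V) : Prop :=
  S.Nonempty ∧ ∀ x ∈ S, ∀ y ∈ S, ReachIn G S x y

lemma ReachIn.refl {S : Finset V} {x : V} (hx : x ∈ S) : ReachIn G S x x :=
  ⟨Walk.nil, by simpa using hx⟩

lemma ReachIn.symm {S : Finset V} {x y : V} (h : ReachIn G S x y) : ReachIn G S y x := by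
  obtain ⟨p, hp⟩ := h
  exact ⟨p.reverse, fun z hz => hp z (by simpa using hz)⟩

lemma ReachIn.trans {S : Finset V} {x y z : V} (h : ReachIn G S x y)
    (h' : ReachIn G S y z) : ReachIn G S x z := by
  obtain ⟨p, hp⟩ := h; obtain ⟨q, hq⟩ := h'
  refine ⟨p.append q, fun w hw => ?_⟩
  rw [Walk.support_append] at hw
  rcases List.mem_append.mp hw with h1 | h1
  · exact hp _ h1
  · exact hq _ (List.mem_of_mem_tail h1)

lemma ReachIn.adj {S : Finset V} {x y : V} (hx : x ∈ S) (hy : y ∈ S)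
    (h : G.Adj x y) : ReachIn G S x y := by
  refine ⟨Walk.cons h Walk.nil, fun z hz => ?_⟩
  simp at hz
  rcases hz with rfl | rfl <;> assumption

lemma ReachIn.mem_left {S : Finset V} {x y : V} (h : ReachIn G S x y) : x ∈ S := by
  obtain ⟨p, hp⟩ := h; exact hp _ p.start_mem_support

lemma ReachIn.mem_right {S : Finset V} {x y : V} (h : ReachIn G S x y) : y ∈ S := by
  obtain ⟨p, hp⟩ := h; exact hp _ p.end_mem_support

lemma ReachIn.mono {S T : Finset V} (hST : S ⊆ T) {x y : V} (h : ReachIn G S x y) :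
    ReachIn G T x y := by
  obtain ⟨p, hp⟩ := h; exact ⟨p, fun z hz => hST (hp z hz)⟩

lemma reach_induce_of_walk {s : Set V} : ∀ {x y : V} (p : G.Walk x y)
    (h : ∀ z ∈ p.support, z ∈ s),
    (G.induce s).Reachable ⟨x, h x p.start_mem_support⟩ ⟨y, h y p.end_mem_support⟩ := by
  intro x y p
  induction p with
  | nil => intro h; rfl
  | cons hadj q ih =>
    intro h
    have h' : ∀ z ∈ q.support, z ∈ s := fun z hz => h z (by simp [hz])
    exact ((SimpleGraph.Adj.reachable (by exact hadj : (G.induce s).Adj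
        ⟨_, h _ (by simp)⟩ ⟨_, h' _ q.start_mem_support⟩)).trans (ih h'))

lemma conn_iff_walks (G : SimpleGraph V) (S : Finset V) :
    (G.induce (S : Set V)).Connected ↔ ConnW G S := by
  constructor
  · intro hc
    obtain ⟨⟨v, hv⟩⟩ := hc.nonempty
    refine ⟨⟨v, hv⟩, fun x hx y hy => ?_⟩
    obtain ⟨p⟩ := hc.preconnected ⟨x, hx⟩ ⟨y, hy⟩
    refine ⟨p.map (Embedding.induce (S : Set V)).toHom, ?_⟩
    intro z hz
    change z ∈ (p.map (Embedding.induce (S : Set V)).toHom).support at hz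
    rw [Walk.support_map, List.mem_map] at hz
    obtain ⟨w, hw, rfl⟩ := hz
    exact w.2
  · rintro ⟨⟨v, hv⟩, hwalk⟩
    haveI : Nonempty (S : Set V) := ⟨⟨v, hv⟩⟩
    refine ⟨fun a b => ?_⟩
    obtain ⟨p, hp⟩ := hwalk a a.2 b b.2
    have := reach_induce_of_walk p hp
    convert this <;> simp

/-- Rebuild a path avoiding a vertex `u` all of whose `S`-neighbors equal `w`. -/
lemma avoid_endpoint {S : Finset V} {u w : V}
    (hu : ∀ c ∈ S, G.Adj u c → c = w) :
    ∀ {x y : V} (p : G.Walk x y), p.IsPath → (∀ z ∈ p.support, z ∈ S) →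
      x ≠ u → y ≠ u → ReachIn G (S.erase u) x y := by
  intro x y p
  induction p with
  | nil =>
    intro _ hsup hx _
    exact ⟨Walk.nil, by simpa using Finset.mem_erase.mpr ⟨hx, hsup _ (by simp)⟩⟩
  | @cons a c b hadj q ih =>
    intro hpath hsup hx hy
    by_cases hc : c = u
    · subst hc
      have ha : a = w := hu a (hsup _ (by simp)) hadj.symm
      cases q with
      | nil => exact absurd rfl hy
      | @cons _ c2 _ hadj2 q2 =>
        have hc2 : c2 = w := hu c2 (hsup _ (by simp)) hadj2
        exfalso
        have : a ∈ (Walk.cons hadj2 q2).support := by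
          rw [Walk.support_cons]
          right
          rw [ha, ← hc2]
          exact q2.start_mem_support
        exact ((Walk.cons_isPath_iff _ _).mp hpath).2 this
    · have hq := ih ((Walk.cons_isPath_iff _ _).mp hpath).1
        (fun z hz => hsup z (by simp [hz])) hc hy
      obtain ⟨r, hr⟩ := hq
      refine ⟨Walk.cons hadj r, fun z hz => ?_⟩
      rw [Walk.support_cons] at hz
      rcases List.mem_cons.mp hz with rfl | hz
      · exact Finset.mem_erase.mpr ⟨hx, hsup _ (by simp)⟩
      · exact hr _ hz

/-- Removing an "endpoint" (vertex with at most one neighbour inside) keeps connectivity. -/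
lemma erase_conn {S : Finset V} {u w : V} (hconn : ConnW G S)
    (hu : ∀ c ∈ S, G.Adj u c → c = w) (hne : (S.erase u).Nonempty) :
    ConnW G (S.erase u) := by
  refine ⟨hne, fun x hx y hy => ?_⟩
  obtain ⟨p, hp⟩ := hconn.2 x (Finset.mem_of_mem_erase hx) y (Finset.mem_of_mem_erase hy)
  exact avoid_endpoint hu p.toPath p.toPath.2 (fun z hz => hp z (p.support_toPath_subset hz))
    (Finset.ne_of_mem_erase hx) (Finset.ne_of_mem_erase hy)

/-- In a connected finset with at least 2 elements, every vertex has a neighbor inside. -/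
lemma exists_adj_in {S : Finset V} (hS : ConnW G S)
    (hcard : 2 ≤ S.card) {x : V} (hx : x ∈ S) : ∃ y ∈ S, G.Adj x y := by
  obtain ⟨z, hz, hzx⟩ : ∃ z ∈ S, z ≠ x := by
    by_contra hcon
    push_neg at hcon
    have : S ⊆ {x} := fun w hw => Finset.mem_singleton.mpr (hcon w hw)
    have := Finset.card_le_card this
    simp at this; omega
  obtain ⟨p, hp⟩ := hS.2 x hx z hz
  cases p with
  | nil => exact absurd rfl hzx
  | cons h q => exact ⟨_, hp _ (by simp), h⟩

end Infra

section Chain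
variable {V : Type*} [DecidableEq V] [Fintype V]

open Classical in
/-- The forced next vertex in a walk through a low-degree region. -/
noncomputable def nxt (G : SimpleGraph V) (prev cur : V) : V :=
  if h : ∃ x, G.Adj cur x ∧ x ≠ prev then h.choose else cur

lemma nxt_eq {G : SimpleGraph V} {prev cur x : V} (hx : G.Adj cur x) (hne : x ≠ prev)
    (huniq : ∀ y, G.Adj cur y → y ≠ prev → y = x) : nxt G prev cur = x := by
  rw [nxt]
  rw [dif_pos ⟨x, hx, hne⟩]
  have h : ∃ x, G.Adj cur x ∧ x ≠ prev := ⟨x, hx, hne⟩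
  exact huniq _ h.choose_spec.1 h.choose_spec.2

/-- The forced trail of `k+1` vertices starting at `cur` coming from `prev`. -/
noncomputable def chain (G : SimpleGraph V) : ℕ → V → V → Finset V
  | 0, _, cur => {cur}
  | k + 1, prev, cur => insert cur (chain G k cur (nxt G prev cur))

variable {G : SimpleGraph V} [DecidableRel G.Adj]

lemma two_nbrs {w u w' : V} (hdeg : G.degree w ≤ 2) (h1 : G.Adj w u) (h2 : G.Adj w w')
    (hne : u ≠ w') : ∀ x, G.Adj w x → x = u ∨ x = w' := by
  have hsub : {u, w'} ⊆ G.neighborFinset w := by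
    intro x hx
    rw [Finset.mem_insert, Finset.mem_singleton] at hx
    rcases hx with rfl | rfl <;> simp [mem_neighborFinset, h1, h2]
  have hcard : (G.neighborFinset w).card ≤ ({u, w'} : Finset V).card := by
    rw [Finset.card_pair hne]
    exact hdeg
  have heq := Finset.eq_of_subset_of_card_le hsub hcard
  intro x hx
  have : x ∈ ({u, w'} : Finset V) := heq ▸ (mem_neighborFinset _ _ _).mpr hx
  simpa using this

lemma chain_correct :
    ∀ m (K : Finset V), K.card = m →
      (∀ v ∈ K, G.degree v ≤ 2) → ConnW G K → ∀ u w, u ∈ K → w ∈ K → G.Adj u w →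
      (∀ x ∈ K, G.Adj u x → x = w) → K = insert u (chain G (K.card - 2) u w) := by
  intro m
  induction m using Nat.strong_induction_on with
  | _ m IH =>
    intro K hm hlow hconn u w hu hw hadj huniq
    have hne' : u ≠ w := hadj.ne
    have h2 : 2 ≤ K.card := by
      have : ({u, w} : Finset V) ⊆ K := by
        intro x hx; rw [Finset.mem_insert, Finset.mem_singleton] at hx
        rcases hx with rfl | rfl <;> assumption
      calc 2 = ({u, w} : Finset V).card := (Finset.card_pair hne').symm
        _ ≤ K.card := Finset.card_le_card this
    rcases eq_or_lt_of_le h2 with h2' | h3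
    · -- K = {u, w}
      have hK : ({u, w} : Finset V) = K :=
        Finset.eq_of_subset_of_card_le
          (by intro x hx; rw [Finset.mem_insert, Finset.mem_singleton] at hx
              rcases hx with rfl | rfl <;> assumption)
          (by rw [Finset.card_pair hne']; omega)
      rw [← hK]
      have : ({u, w} : Finset V).card - 2 = 0 := by rw [Finset.card_pair hne']
      rw [this]
      rfl
    · -- |K| ≥ 3
      set K' := K.erase u with hK'
      have hcK' : K'.card = K.card - 1 := Finset.card_erase_of_mem hu
      have hwK' : w ∈ K' := Finset.mem_erase.mpr ⟨hne'.symm, hw⟩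
      have hconn' : ConnW G K' := erase_conn hconn huniq ⟨w, hwK'⟩
      obtain ⟨w', hw'K', hadjww'⟩ := exists_adj_in hconn' (by omega) hwK'
      have hw'ne_u : w' ≠ u := Finset.ne_of_mem_erase hw'K'
      have hnbrs := two_nbrs (hlow w hw) hadj.symm hadjww' (Ne.symm hw'ne_u)
      have huniq' : ∀ x ∈ K', G.Adj w x → x = w' := by
        intro x hx hxadj
        rcases hnbrs x hxadj with rfl | rfl
        · exact absurd rfl (Finset.ne_of_mem_erase hx)
        · rfl
      have hIH := IH (K.card - 1) (by omega) K' (by omega)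
        (fun v hv => hlow v (Finset.mem_of_mem_erase hv)) hconn' w w' hwK' hw'K' hadjww' huniq'
      have hnxt : nxt G u w = w' := by
        refine nxt_eq hadjww' hw'ne_u ?_
        intro y hy hyne
        rcases hnbrs y hy with rfl | rfl
        · exact absurd rfl hyne
        · rfl
      have hstep : K.card - 2 = (K'.card - 2) + 1 := by omega
      rw [hstep, chain, hnxt, ← hIH]
      exact (Finset.insert_erase hu).symm

/-- A connected finset closed under adjacency is a connected component. -/
lemma closed_eq_component {K : Finset V} (hconn : ConnW G K)
    (hcl : ∀ v ∈ K, ∀ x, G.Adj v x → x ∈ K) {x : V} (hx : x ∈ K) :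
    (K : Set V) = (G.connectedComponentMk x).supp := by
  ext y
  simp only [Finset.coe_sort_coe, ConnectedComponent.mem_supp_iff, Finset.mem_coe,
    ConnectedComponent.eq]
  constructor
  · intro hy
    obtain ⟨p, _⟩ := hconn.2 y hy x hx
    exact ⟨p⟩
  · intro hreach
    obtain ⟨p⟩ := hreach.symm
    clear hreach
    induction p with
    | nil => exact hx
    | @cons a b c hadj q ihq => exact ihq (hcl a hx _ hadj)

/-- Crossing lemma: from a low-degree vertex, the component in `S \ A` reaches a neighbor of
`S ∩ A`. -/
lemma crossing {S A : Finset V} {a : V} (haA : a ∈ A) :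
    ∀ {v : V} (p : G.Walk v a), (∀ z ∈ p.support, z ∈ S) → v ∉ A →
      ∃ x a', a' ∈ S ∧ a' ∈ A ∧ G.Adj a' x ∧ ReachIn G (S \ A) v x := by
  intro v p
  induction p with
  | nil => intro _ hv; exact absurd haA hv
  | @cons b c d hadj q ih =>
    intro hsup hv
    by_cases hc : c ∈ A
    · exact ⟨b, c, hsup c (by simp), hc, hadj.symm,
        ReachIn.refl (Finset.mem_sdiff.mpr ⟨hsup b (by simp), hv⟩)⟩
    · obtain ⟨x, a', h1, h2, h3, h4⟩ := ih haA (fun z hz => hsup z (by simp [hz])) hc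
      exact ⟨x, a', h1, h2, h3,
        (ReachIn.adj (Finset.mem_sdiff.mpr ⟨hsup b (by simp), hv⟩)
          (Finset.mem_sdiff.mpr ⟨hsup c (by simp), hc⟩) hadj).trans h4⟩

open Classical in
/-- The component of `v` inside `T`. -/
noncomputable def comp (G : SimpleGraph V) (T : Finset V) (v : V) : Finset V :=
  T.filter (fun y => ReachIn G T v y)

lemma mem_comp_self {T : Finset V} {v : V} (hv : v ∈ T) : v ∈ comp G T v := by
  rw [comp]; classical
  rw [Finset.mem_filter]
  exact ⟨hv, ReachIn.refl hv⟩

lemma comp_subset {T : Finset V} {v : V} : comp G T v ⊆ T := by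
  classical
  intro y hy
  rw [comp] at hy
  simp only [Finset.mem_filter] at hy
  exact hy.1

lemma reach_comp {T : Finset V} {v y : V} (h : ReachIn G T v y) :
    ReachIn G (comp G T v) v y := by
  obtain ⟨p, hp⟩ := h
  refine ⟨p, fun z hz => ?_⟩
  rw [comp]; classical
  rw [Finset.mem_filter]
  exact ⟨hp z hz, ⟨p.takeUntil z hz, fun z' hz' => hp z' (Walk.support_takeUntil_subset _ _ hz')⟩⟩

lemma mem_comp_iff {T : Finset V} {v y : V} : y ∈ comp G T v ↔ y ∈ T ∧ ReachIn G T v y := by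
  rw [comp]; classical
  rw [Finset.mem_filter]

lemma comp_conn {T : Finset V} {v : V} (hv : v ∈ T) : ConnW G (comp G T v) := by
  refine ⟨⟨v, mem_comp_self hv⟩, fun x hx y hy => ?_⟩
  have hx' := (mem_comp_iff.mp hx).2
  have hy' := (mem_comp_iff.mp hy).2
  exact (reach_comp hx').symm.trans (reach_comp hy')

lemma comp_eq_of_mem {T : Finset V} {v y : V} (h : ReachIn G T v y) :
    comp G T y = comp G T v := by
  ext z
  rw [mem_comp_iff, mem_comp_iff]
  exact ⟨fun ⟨hz, hr⟩ => ⟨hz, h.trans hr⟩, fun ⟨hz, hr⟩ => ⟨hz, h.symm.trans hr⟩⟩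

/-- Codes for connected subsets of the low-degree region. -/
noncomputable def decodeC (G : SimpleGraph V) [DecidableRel G.Adj] :
    (V × V × Fin (Fintype.card V + 1)) ⊕ V → Set V
  | Sum.inl (u, w, k) => ↑(insert u (chain G k u w))
  | Sum.inr x => (G.connectedComponentMk x).supp

/-- Every connected low-degree finset has a code. -/
lemma code_exists {K : Finset V} (hlow : ∀ v ∈ K, G.degree v ≤ 2) (hconn : ConnW G K) :
    ∃ c, decodeC G c = ↑K := by
  classical
  rcases Nat.lt_or_ge K.card 2 with h1 | h2
  · -- singleton
    obtain ⟨v, hv⟩ := hconn.1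
    have hcard : K.card = 1 := le_antisymm (by omega) (Finset.card_pos.mpr ⟨v, hv⟩)
    obtain ⟨u, hu⟩ := Finset.card_eq_one.mp hcard
    refine ⟨Sum.inl (u, u, ⟨0, by omega⟩), ?_⟩
    rw [decodeC, hu]
    norm_num [chain]
  by_cases hep : ∃ u ∈ K, (K.filter (fun x => G.Adj u x)).card ≤ 1
  · obtain ⟨u, hu, hu1⟩ := hep
    obtain ⟨w, hw, hadj⟩ := exists_adj_in hconn h2 hu
    have huniq : ∀ x ∈ K, G.Adj u x → x = w := by
      intro x hx hxadj
      have hxf : x ∈ K.filter (fun x => G.Adj u x) := Finset.mem_filter.mpr ⟨hx, hxadj⟩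
      have hwf : w ∈ K.filter (fun x => G.Adj u x) := Finset.mem_filter.mpr ⟨hw, hadj⟩
      exact Finset.card_le_one.mp hu1 _ hxf _ hwf
    have hK := chain_correct K.card K rfl hlow hconn u w hu hw hadj huniq
    have hcle : K.card - 2 < Fintype.card V + 1 := by
      have := Finset.card_le_univ K
      omega
    exact ⟨Sum.inl (u, w, ⟨K.card - 2, hcle⟩), by rw [decodeC, ← hK]⟩
  · -- every vertex has ≥ 2 neighbours inside: K is closed under adjacency
    push_neg at hep
    have hcl : ∀ v ∈ K, ∀ x, G.Adj v x → x ∈ K := by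
      intro v hv x hx
      have h2f : 2 ≤ (K.filter (fun y => G.Adj v y)).card := hep v hv
      have hsub : K.filter (fun y => G.Adj v y) ⊆ G.neighborFinset v := by
        intro y hy
        exact (mem_neighborFinset _ _ _).mpr (Finset.mem_filter.mp hy).2
      have : G.neighborFinset v = K.filter (fun y => G.Adj v y) :=
        Finset.eq_of_subset_of_card_le hsub (le_trans (hlow v hv) h2f) |>.symm
      have hxm : x ∈ G.neighborFinset v := (mem_neighborFinset _ _ _).mpr hx
      rw [this] at hxm
      exact (Finset.mem_filter.mp hxm).1
    obtain ⟨v, hv⟩ := hconn.1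
    exact ⟨Sum.inr v, (closed_eq_component hconn hcl hv).symm⟩

noncomputable def aList (G : SimpleGraph V) [DecidableRel G.Adj] : List V :=
  (Finset.univ.filter fun v => 3 ≤ G.degree v).toList

open Classical in
/-- Full decoder for connected subsets. -/
noncomputable def fullDecode (G : SimpleGraph V) [DecidableRel G.Adj] (v₀ : V) (t d : ℕ)
    (γ : (Fin t → Bool) × (Fin t → Fin d → Option ((V × V × Fin (Fintype.card V + 1)) ⊕ V)) ×
      Option ((V × V × Fin (Fintype.card V + 1)) ⊕ V)) : Set V :=
  (⋃ i : Fin t, if γ.1 i then {(aList G).getD i v₀} else (∅ : Set V)) ∪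
  (⋃ i : Fin t, ⋃ j : Fin d, Option.elim (γ.2.1 i j) ∅ (decodeC G)) ∪
  Option.elim γ.2.2 ∅ (decodeC G)

lemma code_main (t d : ℕ) (v₀ : V)
    (hA : (Finset.univ.filter fun v => 3 ≤ G.degree v).card ≤ t)
    (hd : ∀ v, G.degree v ≤ d)
    {S : Finset V} (hS : ConnW G S) :
    ∃ γ, fullDecode G v₀ t d γ = ↑S := by
  classical
  set A : Finset V := Finset.univ.filter (fun v => 3 ≤ G.degree v) with hAdef
  have hlow : ∀ v, v ∉ A → G.degree v ≤ 2 := by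
    intro v hv
    rw [hAdef, Finset.mem_filter] at hv
    push_neg at hv
    have := hv (Finset.mem_univ v)
    omega
  have hlen : (aList G).length = A.card := Finset.length_toList _
  have hcomp : ∀ v, v ∈ S \ A → ∃ c, decodeC G c = ↑(comp G (S \ A) v) := by
    intro v hv
    refine code_exists (fun y hy => hlow y (Finset.mem_sdiff.mp (comp_subset hy)).2)
      (comp_conn hv)
  set cv : V → Option ((V × V × Fin (Fintype.card V + 1)) ⊕ V) :=
    fun v => if hv : v ∈ S \ A then some (Classical.choose (hcomp v hv)) else none with hcvdef
  set bb : Fin t → Bool :=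
    fun i => if ((i : ℕ) < (aList G).length ∧ (aList G).getD i v₀ ∈ S) then true else false
    with hbbdef
  set cond : Fin t → Fin d → Prop := fun i j =>
    (i : ℕ) < (aList G).length ∧ (aList G).getD i v₀ ∈ S ∧
    (j : ℕ) < (G.neighborFinset ((aList G).getD i v₀)).toList.length ∧
    ((G.neighborFinset ((aList G).getD i v₀)).toList.getD j v₀) ∈ S \ A with hconddef
  set ff : Fin t → Fin d → Option ((V × V × Fin (Fintype.card V + 1)) ⊕ V) :=
    fun i j => if cond i j then cv ((G.neighborFinset ((aList G).getD i v₀)).toList.getD j v₀)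
      else none with hffdef
  have hwhole : S ∩ A = ∅ → ∃ c, decodeC G c = ↑S := by
    intro hSA
    refine code_exists (fun y hy => hlow y ?_) hS
    intro hyA
    exact absurd (Finset.mem_inter.mpr ⟨hy, hyA⟩) (by rw [hSA]; simp)
  set gg : Option ((V × V × Fin (Fintype.card V + 1)) ⊕ V) :=
    if hg : S ∩ A = ∅ then some (Classical.choose (hwhole hg)) else none with hggdef
  have haL : aList G = A.toList := rfl
  refine ⟨(bb, ff, gg), ?_⟩
  rw [fullDecode]
  dsimp only
  apply Set.Subset.antisymm
  · -- decode ⊆ S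
    intro x hx
    rcases hx with hx | hx
    · rcases hx with hx | hx
      · obtain ⟨i, hBi⟩ := Set.mem_iUnion.mp hx
        by_cases hb : bb i
        · rw [if_pos hb] at hBi
          rw [hbbdef] at hb
          simp only [Bool.if_false_right, Bool.and_true, decide_eq_true_eq] at hb
          rw [Set.mem_singleton_iff.mp hBi]
          exact hb.2
        · rw [if_neg hb] at hBi
          exact absurd hBi (Set.notMem_empty x)
      · obtain ⟨i, hx⟩ := Set.mem_iUnion.mp hx
        obtain ⟨j, hx⟩ := Set.mem_iUnion.mp hx
        by_cases hc : cond i j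
        · rw [hffdef] at hx
          simp only [if_pos hc] at hx
          have hmem := hc.2.2.2
          rw [hcvdef] at hx
          simp only [dif_pos hmem] at hx
          rw [Option.elim_some, Classical.choose_spec (hcomp _ hmem)] at hx
          have := comp_subset (Finset.mem_coe.mp hx)
          exact (Finset.mem_sdiff.mp this).1
        · rw [hffdef] at hx
          simp only [if_neg hc] at hx
          exact absurd hx (Set.notMem_empty x)
    · by_cases hg : S ∩ A = ∅
      · rw [hggdef] at hx
        simp only [dif_pos hg] at hx
        rw [Option.elim_some, Classical.choose_spec (hwhole hg)] at hx
        exact hx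
      · rw [hggdef] at hx
        simp only [dif_neg hg] at hx
        exact absurd hx (Set.notMem_empty x)
  · -- S ⊆ decode
    intro x hxS
    by_cases hxA : x ∈ A
    · -- x is recorded in bb
      have hxL : x ∈ aList G := by rw [haL]; exact Finset.mem_toList.mpr hxA
      obtain ⟨i, hi, hgeti⟩ := List.getElem_of_mem hxL
      have hit : i < t := by rw [hlen] at hi; omega
      left; left
      refine Set.mem_iUnion.mpr ⟨⟨i, hit⟩, ?_⟩
      have hgetD : (aList G).getD i v₀ = x := by
        rw [List.getD_eq_getElem _ _ hi, hgeti]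
      have hb : bb ⟨i, hit⟩ = true := by
        rw [hbbdef]
        simp only
        rw [if_pos ⟨hi, by rw [hgetD]; exact hxS⟩]
      rw [if_pos hb, Set.mem_singleton_iff]
      exact hgetD.symm
    · by_cases hg : S ∩ A = ∅
      · right
        rw [hggdef]
        simp only [dif_pos hg, Option.elim_some, Classical.choose_spec (hwhole hg)]
        exact hxS
      · -- crossing
        obtain ⟨a, ha⟩ := Finset.nonempty_iff_ne_empty.mpr hg
        have haS := (Finset.mem_inter.mp ha).1
        have haA := (Finset.mem_inter.mp ha).2
        obtain ⟨p, hp⟩ := hS.2 x hxS a haS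
        obtain ⟨x', a', ha'S, ha'A, hadj, hreach⟩ := crossing haA p hp hxA
        obtain ⟨i, hi, hgeti⟩ := List.getElem_of_mem
          (show a' ∈ aList G by rw [haL]; exact Finset.mem_toList.mpr ha'A)
        have hit : i < t := by rw [hlen] at hi; omega
        have hgetD : (aList G).getD i v₀ = a' := by
          rw [List.getD_eq_getElem _ _ hi, hgeti]
        have hx'nb : x' ∈ (G.neighborFinset a').toList :=
          Finset.mem_toList.mpr ((mem_neighborFinset _ _ _).mpr hadj)
        obtain ⟨j, hj, hgetj⟩ := List.getElem_of_mem hx'nb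
        have hjd : j < d := by
          have h1 : (G.neighborFinset a').toList.length = G.degree a' := Finset.length_toList _
          have := hd a'
          omega
        have hx'SA : x' ∈ S \ A := hreach.mem_right
        left; right
        refine Set.mem_iUnion.mpr ⟨⟨i, hit⟩, Set.mem_iUnion.mpr ⟨⟨j, hjd⟩, ?_⟩⟩
        have hgetDj : (G.neighborFinset ((aList G).getD i v₀)).toList.getD j v₀ = x' := by
          rw [hgetD, List.getD_eq_getElem _ _ hj, hgetj]
        have hcond : cond ⟨i, hit⟩ ⟨j, hjd⟩ := by
          rw [hconddef]
          refine ⟨hi, by rw [hgetD]; exact ha'S, by rw [hgetD]; exact hj, by rw [hgetDj]; exact hx'SA⟩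
        rw [hffdef]
        simp only [if_pos hcond]
        rw [hgetDj, hcvdef]
        simp only [dif_pos hx'SA, Option.elim_some, Classical.choose_spec (hcomp x' hx'SA)]
        rw [Finset.mem_coe, mem_comp_iff]
        exact ⟨hreach.mem_left, hreach.symm⟩

end Chain

section Count
lemma ncard_le_of_decode {α β : Type*} [Fintype β] (P : Set α) (dec : β → α)
    (h : ∀ a ∈ P, ∃ b, dec b = a) : P.ncard ≤ Fintype.card β := by
  classical
  have hsub : P ⊆ Set.range dec := by
    intro a ha
    obtain ⟨b, hb⟩ := h a ha
    exact ⟨b, hb⟩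
  calc P.ncard ≤ (Set.range dec).ncard :=
        Set.ncard_le_ncard hsub (Set.finite_range dec)
    _ ≤ (Set.univ : Set β).ncard := by
        rw [← Set.image_univ]
        exact Set.ncard_image_le Set.finite_univ
    _ = Fintype.card β := by rw [Set.ncard_univ, Nat.card_eq_fintype_card]

lemma bern (d t : ℕ) : d * t + 1 ≤ (d + 1) ^ t := by
  induction t with
  | zero => simp
  | succ t ih =>
    calc d * (t + 1) + 1 ≤ (d * t + 1) * (d + 1) := by
          have hx : (d * t + 1) * (d + 1) = d * (d * t) + d * t + d + 1 := by ring
          have hy : d * (t + 1) + 1 = d * t + d + 1 := by ring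
          linarith [Nat.zero_le (d * (d * t))]
      _ ≤ (d + 1) ^ t * (d + 1) := mul_le_mul_left ih (d + 1)
      _ = (d + 1) ^ (t + 1) := (pow_succ _ _).symm

lemma arith_main (n d t : ℕ) (hd : 2 ≤ d) (hn : 1 ≤ n) :
    2 ^ t * ((n * (n * (n + 1)) + n + 1) ^ d) ^ t * (n * (n * (n + 1)) + n + 1) ≤
      2 ^ ((2 * (d + 1)) ^ (t + 1)) * n ^ ((d + 1) ^ (t + 1)) := by
  have e1 : 1 ≤ n ^ 3 := Nat.one_le_pow _ _ (by omega)
  have e2 : n ≤ n ^ 3 := Nat.le_self_pow (by omega) n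
  have e3 : n * n ≤ n ^ 3 := by nlinarith
  have e4 : n * (n * (n + 1)) = n ^ 3 + n * n := by ring
  have hC : n * (n * (n + 1)) + n + 1 ≤ 2 ^ 2 * n ^ 3 := by omega
  have h1 : 2 ^ t * ((n * (n * (n + 1)) + n + 1) ^ d) ^ t * (n * (n * (n + 1)) + n + 1) ≤
      2 ^ t * ((2 ^ 2 * n ^ 3) ^ d) ^ t * (2 ^ 2 * n ^ 3) := by
    apply Nat.mul_le_mul
    apply Nat.mul_le_mul_left
    · exact Nat.pow_le_pow_left (Nat.pow_le_pow_left hC d) t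
    · exact hC
  have h2 : 2 ^ t * ((2 ^ 2 * n ^ 3) ^ d) ^ t * (2 ^ 2 * n ^ 3) =
      2 ^ (t + 2 * (d * t) + 2) * n ^ (3 * (d * t) + 3) := by
    have hL : 2 ^ t * ((2 ^ 2 * n ^ 3) ^ d) ^ t * (2 ^ 2 * n ^ 3)
        = 2 ^ t * (2 ^ (2 * (d * t)) * n ^ (3 * (d * t))) * (2 ^ 2 * n ^ 3) := by
      rw [← pow_mul, mul_pow, ← pow_mul, ← pow_mul]
    have hR : 2 ^ (t + 2 * (d * t) + 2) * n ^ (3 * (d * t) + 3)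
        = (2 ^ t * 2 ^ (2 * (d * t)) * 2 ^ 2) * (n ^ (3 * (d * t)) * n ^ 3) := by
      rw [pow_add, pow_add, pow_add]
    rw [hL, hR]
    ring
  have hb : d * t + 1 ≤ (d + 1) ^ t := bern d t
  have hkey : 3 * (d * t) + 3 ≤ (d + 1) ^ (t + 1) := by
    have he : (d + 1) ^ (t + 1) = (d + 1) ^ t * (d + 1) := by ring
    calc 3 * (d * t) + 3 ≤ (d * t + 1) * (d + 1) := by
          have hx : (d * t + 1) * (d + 1) = d * (d * t) + d * t + d + 1 := by ring
          have h2dt : 2 * (d * t) ≤ d * (d * t) := Nat.mul_le_mul_right _ hd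
          linarith
      _ ≤ (d + 1) ^ t * (d + 1) := mul_le_mul_left hb (d + 1)
      _ = (d + 1) ^ (t + 1) := (pow_succ _ _).symm
  have hkey2 : t + 2 * (d * t) + 2 ≤ (2 * (d + 1)) ^ (t + 1) := by
    have hexp : (2 * (d + 1)) ^ (t + 1) = 2 ^ (t + 1) * (d + 1) ^ (t + 1) := by
      rw [mul_pow]
    have h2t : 2 ≤ 2 ^ (t + 1) := by
      have h0 : 1 ≤ 2 ^ t := Nat.one_le_two_pow
      calc (2:ℕ) = 2 * 1 := by ring
        _ ≤ 2 * 2 ^ t := by omega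
        _ = 2 ^ (t + 1) := by ring
    have htd : t ≤ d * t := Nat.le_mul_of_pos_left t (by omega)
    have hmm : 2 * (3 * (d * t) + 3) ≤ 2 ^ (t + 1) * (d + 1) ^ (t + 1) :=
      Nat.mul_le_mul h2t hkey
    omega
  calc 2 ^ t * ((n * (n * (n + 1)) + n + 1) ^ d) ^ t * (n * (n * (n + 1)) + n + 1)
      ≤ 2 ^ (t + 2 * (d * t) + 2) * n ^ (3 * (d * t) + 3) := by rw [← h2]; exact h1
    _ ≤ 2 ^ ((2 * (d + 1)) ^ (t + 1)) * n ^ ((d + 1) ^ (t + 1)) :=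
        Nat.mul_le_mul (Nat.pow_le_pow_right (by omega) hkey2)
          (Nat.pow_le_pow_right hn hkey)

end Count

section Small
variable {V : Type*} [DecidableEq V] [Fintype V] {G : SimpleGraph V} [DecidableRel G.Adj]

/-- With max degree ≤ 1, reachable vertices are equal or adjacent. -/
lemma reach_pair (hd1 : ∀ v, G.degree v ≤ 1) :
    ∀ {x y : V} (_ : G.Walk x y), y = x ∨ G.Adj x y := by
  intro x y p
  induction p with
  | nil => left; rfl
  | @cons a c b hadj q ih =>
    rcases ih with rfl | hcy
    · right; exact hadj
    · -- c adjacent to both a and b; degree c ≤ 1 forces a = b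
      left
      have h1 : a ∈ G.neighborFinset c := (mem_neighborFinset _ _ _).mpr hadj.symm
      have h2 : b ∈ G.neighborFinset c := (mem_neighborFinset _ _ _).mpr hcy
      have := Finset.card_le_one.mp (hd1 c) _ h1 _ h2
      exact this.symm

/-- With max degree ≤ 1, connected sets have ≤ 2 elements and a simple code. -/
lemma small_code (hd1 : ∀ v, G.degree v ≤ 1) {S : Finset V}
    (hS : ConnW G S) : ∃ c : V × V, (fun p : V × V => ({p.1, p.2} : Finset V)) c = S := by
  obtain ⟨u, hu⟩ := hS.1
  by_cases h2 : ∃ w ∈ S, w ≠ u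
  · obtain ⟨w, hw, hwu⟩ := h2
    obtain ⟨p, _⟩ := hS.2 u hu w hw
    have hadj : G.Adj u w := by
      rcases reach_pair hd1 p with rfl | h
      · exact absurd rfl hwu
      · exact h
    refine ⟨(u, w), ?_⟩
    simp only
    apply Finset.Subset.antisymm
    · intro x hx
      rw [Finset.mem_insert, Finset.mem_singleton] at hx
      rcases hx with rfl | rfl <;> assumption
    · intro x hx
      rw [Finset.mem_insert, Finset.mem_singleton]
      obtain ⟨q, _⟩ := hS.2 u hu x hx
      rcases reach_pair hd1 q with rfl | h
      · left; rfl
      · right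
        have h1 : w ∈ G.neighborFinset u := (mem_neighborFinset _ _ _).mpr hadj
        have h2 : x ∈ G.neighborFinset u := (mem_neighborFinset _ _ _).mpr h
        exact Finset.card_le_one.mp (hd1 u) _ h2 _ h1
  · push_neg at h2
    refine ⟨(u, u), ?_⟩
    simp only [Finset.insert_idem]
    apply Finset.Subset.antisymm
    · intro x hx
      rw [Finset.mem_insert, Finset.mem_singleton] at hx
      rcases hx with rfl | rfl <;> assumption
    · intro x hx
      rw [Finset.mem_insert]
      left
      exact h2 x hx

/-- With max degree 0, connected sets are singletons. -/
lemma zero_code (hd0 : ∀ v, G.degree v ≤ 0) {S : Finset V}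
    (hS : ConnW G S) : ∃ c : V, ({c} : Finset V) = S := by
  obtain ⟨u, hu⟩ := hS.1
  refine ⟨u, Finset.Subset.antisymm (by simpa using hu) ?_⟩
  intro x hx
  obtain ⟨q, _⟩ := hS.2 u hu x hx
  rcases reach_pair (fun v => le_trans (hd0 v) (by omega)) q with rfl | h
  · simp
  · exfalso
    have h2 : x ∈ G.neighborFinset u := (mem_neighborFinset _ _ _).mpr h
    have hpos := Finset.card_pos.mpr ⟨x, h2⟩
    have hz := hd0 u
    rw [SimpleGraph.degree] at hz
    omega

end Small

/-- Bound on the number of connected induced subgraphs of a graph with `n` vertices,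
maximum degree at most `d`, and at most `t` vertices of degree ≥ 3. -/
theorem stmt6 (n d t : ℕ) {V : Type*} [Fintype V] (G : SimpleGraph V)
    [DecidableRel G.Adj]
    (hcard : Fintype.card V = n)
    (hdeg : ∀ v, G.degree v ≤ d)
    (ht : {v : V | 3 ≤ G.degree v}.ncard ≤ t) :
    {S : Finset V | (G.induce (S : Set V)).Connected}.ncard ≤
      2 ^ ((2 * (d + 1)) ^ (t + 1)) * n ^ ((d + 1) ^ (t + 1)) := by
  classical
  set P := {S : Finset V | (G.induce (S : Set V)).Connected} with hPdef
  have hPconn : ∀ S ∈ P, ConnW G S := fun S hS => (conn_iff_walks G S).mp hS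
  rcases Nat.eq_zero_or_pos n with hn0 | hn
  · -- no vertices
    have hVempty : IsEmpty V := Fintype.card_eq_zero_iff.mp (by omega)
    have hP : P = ∅ := by
      ext S
      simp only [Set.mem_empty_iff_false, iff_false]
      intro hS
      obtain ⟨v, -⟩ := (hPconn S hS).1
      exact hVempty.elim v
    rw [hP]
    simp
  have hn1 : 1 ≤ n := hn
  obtain ⟨v₀⟩ : Nonempty V := Fintype.card_pos_iff.mp (by omega)
  -- pass to sets of vertex sets
  have hinj : Set.InjOn (fun S : Finset V => (S : Set V)) P :=
    fun S _ T _ h => Finset.coe_injective h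
  have hPcard : P.ncard = ((fun S : Finset V => (S : Set V)) '' P).ncard :=
    (Set.ncard_image_of_injOn hinj).symm
  rcases Nat.lt_or_ge d 2 with hd2 | hd2
  · rcases Nat.eq_zero_or_pos d with hd0 | hd1
    · -- d = 0
      subst hd0
      have hle : P.ncard ≤ Fintype.card V := by
        apply ncard_le_of_decode P (fun c : V => ({c} : Finset V))
        intro S hS
        exact zero_code hdeg (hPconn S hS)
      calc P.ncard ≤ Fintype.card V := hle
        _ = n := hcard
        _ = 1 * n ^ ((0 + 1) ^ (t + 1)) := by norm_num
        _ ≤ 2 ^ ((2 * (0 + 1)) ^ (t + 1)) * n ^ ((0 + 1) ^ (t + 1)) :=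
            Nat.mul_le_mul_right _ (Nat.one_le_two_pow)
    · -- d = 1
      have hd1' : d = 1 := by omega
      subst hd1'
      have hle : P.ncard ≤ Fintype.card (V × V) := by
        apply ncard_le_of_decode P (fun c : V × V => ({c.1, c.2} : Finset V))
        intro S hS
        exact small_code hdeg (hPconn S hS)
      have h2t : 2 ≤ 2 ^ (t + 1) := by
        have h0 : 1 ≤ 2 ^ t := Nat.one_le_two_pow
        calc (2:ℕ) = 2 * 1 := by ring
          _ ≤ 2 * 2 ^ t := by omega
          _ = 2 ^ (t + 1) := by ring
      calc P.ncard ≤ Fintype.card (V × V) := hle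
        _ = n ^ 2 := by rw [Fintype.card_prod, hcard]; ring
        _ ≤ n ^ ((1 + 1) ^ (t + 1)) := Nat.pow_le_pow_right hn1 (by
            calc 2 ≤ 2 ^ (t + 1) := h2t
              _ = (1 + 1) ^ (t + 1) := by norm_num)
        _ ≤ 2 ^ ((2 * (1 + 1)) ^ (t + 1)) * n ^ ((1 + 1) ^ (t + 1)) := by
            have := Nat.one_le_two_pow (n := (2 * (1 + 1)) ^ (t + 1))
            calc n ^ ((1 + 1) ^ (t + 1)) = 1 * n ^ ((1 + 1) ^ (t + 1)) := by ring
              _ ≤ 2 ^ ((2 * (1 + 1)) ^ (t + 1)) * n ^ ((1 + 1) ^ (t + 1)) :=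
                  Nat.mul_le_mul_right _ this
  · -- main case d ≥ 2
    have hA : (Finset.univ.filter fun v => 3 ≤ G.degree v).card ≤ t := by
      have hset : {v : V | 3 ≤ G.degree v} =
          ↑(Finset.univ.filter fun v => 3 ≤ G.degree v) := by
        ext v; simp
      rw [hset, Set.ncard_coe_finset] at ht
      exact ht
    have hle : P.ncard ≤ Fintype.card
        ((Fin t → Bool) × (Fin t → Fin d → Option ((V × V × Fin (Fintype.card V + 1)) ⊕ V)) ×
          Option ((V × V × Fin (Fintype.card V + 1)) ⊕ V)) := by
      rw [hPcard]
      apply ncard_le_of_decode _ (fullDecode G v₀ t d)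
      rintro A ⟨S, hS, rfl⟩
      exact code_main t d v₀ hA hdeg (hPconn S hS)
    have hcardΓ : Fintype.card
        ((Fin t → Bool) × (Fin t → Fin d → Option ((V × V × Fin (Fintype.card V + 1)) ⊕ V)) ×
          Option ((V × V × Fin (Fintype.card V + 1)) ⊕ V)) =
        2 ^ t * ((n * (n * (n + 1)) + n + 1) ^ d) ^ t * (n * (n * (n + 1)) + n + 1) := by
      simp [Fintype.card_prod, Fintype.card_sum, Fintype.card_option, Fintype.card_fun,
        Fintype.card_fin, hcard]
      ring
    calc P.ncard ≤ _ := hle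
      _ = 2 ^ t * ((n * (n * (n + 1)) + n + 1) ^ d) ^ t * (n * (n * (n + 1)) + n + 1) := hcardΓ
      _ ≤ 2 ^ ((2 * (d + 1)) ^ (t + 1)) * n ^ ((d + 1) ^ (t + 1)) := arith_main n d t hd2 hn1
end

section
/- Suppose (p°, x°) is an optimal point of P_n with defender utility U° = p_n°·Δ_{D,n} − a·x°, and suppose x° + Δ_n ≥ c > 0 for some constant c. Let ε' ∈ (0, ε] and let τ = max{0, max_{i≤n} ε'(p_n° − p_i°)/(x° + ε' + Δ_n)}. If p_n° ≥ τ, then the point with x̂ = x° + ε', p̂_n = p_n° − τ, and p̂_i = p_i° for i ≠ n satisfies all best-response constraints x(p_n − p_i) − p_i Δ_i + p_n Δ_n + δ_{i,n} ≤ 0 for all i ≠ n, and its objective value is at least U° − ε·(max_i |p_n° − p_i°|/(x° + Δ_n) + a)·(1 + o(1)). -/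
open Finset

/-- Case 1 of the FPT approximation theorem: shifting `x` up by `ε' ≤ ε` and `pₙ`
down by `τ` preserves all best-response constraints and loses at most
`ε·(Δ_{D,n}·maxᵢ|pₙ° − pᵢ°|/(x° + Δₙ) + a)` in the objective. -/
theorem stmt13 {n : ℕ} (i₀ : Fin n) (Δ δ : Fin n → ℝ) (ΔD a c ε ε' x₀ : ℝ)
    (p₀ : Fin n → ℝ) (τ : ℝ)
    (hΔ : ∀ i, 0 ≤ Δ i) (hΔD : 0 ≤ ΔD) (ha : 0 ≤ a)
    (hc : 0 < c) (hxc : c ≤ x₀ + Δ i₀) (hx₀ : 0 ≤ x₀)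
    (hε' : 0 < ε') (hεε : ε' ≤ ε)
    (hτ : τ = max 0 (Finset.univ.sup' ⟨i₀, Finset.mem_univ i₀⟩
      fun i => ε' * (p₀ i₀ - p₀ i) / (x₀ + ε' + Δ i₀)))
    (hpτ : τ ≤ p₀ i₀)
    (hfeas : ∀ i, i ≠ i₀ →
      x₀ * (p₀ i₀ - p₀ i) - p₀ i * Δ i + p₀ i₀ * Δ i₀ + δ i ≤ 0) :
    (∀ i, i ≠ i₀ →
      (x₀ + ε') * ((p₀ i₀ - τ) - p₀ i) - p₀ i * Δ i + (p₀ i₀ - τ) * Δ i₀ + δ i ≤ 0) ∧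
    (p₀ i₀ - τ) * ΔD - a * (x₀ + ε') ≥
      (p₀ i₀ * ΔD - a * x₀) -
        ε * (ΔD * (Finset.univ.sup' ⟨i₀, Finset.mem_univ i₀⟩
          fun i => |p₀ i₀ - p₀ i|) / (x₀ + Δ i₀) + a) := by
  have hA : 0 < x₀ + Δ i₀ := lt_of_lt_of_le hc hxc
  have hD : 0 < x₀ + ε' + Δ i₀ := by linarith
  have hne : (Finset.univ : Finset (Fin n)).Nonempty := ⟨i₀, Finset.mem_univ i₀⟩
  constructor
  · intro i hi
    have h1 := hfeas i hi
    have h2 : ε' * (p₀ i₀ - p₀ i) / (x₀ + ε' + Δ i₀) ≤ τ := by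
      rw [hτ]
      exact le_max_of_le_right (Finset.le_sup' (fun i => ε' * (p₀ i₀ - p₀ i) / (x₀ + ε' + Δ i₀)) (Finset.mem_univ i))
    have h3 : ε' * (p₀ i₀ - p₀ i) ≤ τ * (x₀ + ε' + Δ i₀) := by
      rw [div_le_iff₀ hD] at h2; linarith
    nlinarith
  · have hM : ∀ j, |p₀ i₀ - p₀ j| ≤ Finset.univ.sup' hne fun i => |p₀ i₀ - p₀ i| :=
      fun j => Finset.le_sup' (fun i => |p₀ i₀ - p₀ i|) (Finset.mem_univ j)
    set M := Finset.univ.sup' hne fun i => |p₀ i₀ - p₀ i| with hMdef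
    have hM0 : 0 ≤ M := le_trans (abs_nonneg _) (hM i₀)
    have hτle : τ ≤ ε * M / (x₀ + Δ i₀) := by
      rw [hτ, max_le_iff]
      have hε0 : (0:ℝ) ≤ ε := le_trans hε'.le hεε
      refine ⟨div_nonneg (mul_nonneg hε0 hM0) hA.le, Finset.sup'_le _ _ fun j _ => ?_⟩
      rw [div_le_div_iff₀ hD hA]
      have habs : p₀ i₀ - p₀ j ≤ M := le_trans (le_abs_self _) (hM j)
      rcases le_or_gt (p₀ i₀ - p₀ j) 0 with h | h
      · nlinarith [mul_nonneg (mul_nonneg hε0 hM0) hD.le,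
          mul_nonneg (mul_nonneg hε'.le (neg_nonneg.mpr h)) hA.le]
      · nlinarith [mul_le_mul_of_nonneg_right
            (mul_le_mul hεε habs h.le hε0) hA.le,
          mul_le_mul_of_nonneg_left
            (show x₀ + Δ i₀ ≤ x₀ + ε' + Δ i₀ by linarith)
            (mul_nonneg hε0 hM0)]
    have key1 : τ * ΔD ≤ ε * M / (x₀ + Δ i₀) * ΔD :=
      mul_le_mul_of_nonneg_right hτle hΔD
    have key2 : ε * (ΔD * M / (x₀ + Δ i₀)) = ε * M / (x₀ + Δ i₀) * ΔD := by ring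
    have key3 : a * ε' ≤ a * ε := mul_le_mul_of_nonneg_left hεε ha
    nlinarith [key1, key2, key3]
end

section
/- Two targets t_i and t_k with identical auditing-resource sets can be merged without changing the marginal polytope: if F(t_i) = F(t_k) (the same set of resources can audit both), then the polytope of implementable coverage vectors projected onto coordinates (p_i + p_k, (p_l)_{l ≠ i,k}) equals the implementable polytope of the instance in which t_i and t_k are replaced by a single merged target with capacity bound p_i + p_k ≤ 2 and the same resource set. -/
lemma sum_split18 {n : ℕ} (i₁ : Fin n) (f : Fin n → ℝ) :
    ∑ l, f l = (∑ l : {l : Fin n // l ≠ i₁}, f l.val) + f i₁ := by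
  rw [← Finset.sum_erase_add _ _ (Finset.mem_univ i₁)]
  congr 1
  exact Finset.sum_subtype _ (fun x => by simp) _

lemma sum_diff_single18 {α} [Fintype α] [DecidableEq α] (f g : α → ℝ) (a : α)
    (h : ∀ x, x ≠ a → f x = g x) : ∑ x, f x = ∑ x, g x + (f a - g a) := by
  have h1 : ∑ x, (f x - g x) = f a - g a :=
    Finset.sum_eq_single a (fun b _ hb => by rw [h b hb]; ring) (by simp)
  have h2 : ∑ x, (f x - g x) = ∑ x, f x - ∑ x, g x := Finset.sum_sub_distrib f g
  linarith


/-- Implementable coverage vectors: marginals of a nonnegative fractional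
assignment with row sums ≤ 1, marginals ≤ 1, respecting the restriction `R`. -/
def Impl18 (n k : ℕ) (R : Fin k → Fin n → Prop) : Set (Fin n → ℝ) :=
  {p | ∃ q : Fin k → Fin n → ℝ,
    (∀ j i, 0 ≤ q j i) ∧ (∀ i, p i = ∑ j, q j i) ∧ (∀ i, p i ≤ 1) ∧
    (∀ j, ∑ i, q j i ≤ 1) ∧ ∀ j i, R j i → q j i = 0}

/-- Merging two targets with identical auditing-resource sets: the projection of the
implementable polytope onto `(pᵢ + pₖ, (p_l)_{l ≠ i,k})` equals the implementable
polytope of the merged instance, where the merged target has capacity 2. -/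
theorem stmt18 {n k : ℕ} (R : Fin k → Fin n → Prop)
    (i₀ i₁ : Fin n) (hne : i₀ ≠ i₁)
    (hsame : ∀ j, R j i₀ ↔ R j i₁) :
    (fun p : Fin n → ℝ => fun l : {l : Fin n // l ≠ i₁} =>
        if l.val = i₀ then p i₀ + p i₁ else p l.val) '' Impl18 n k R
      = {p' : {l : Fin n // l ≠ i₁} → ℝ |
          ∃ q : Fin k → {l : Fin n // l ≠ i₁} → ℝ,
            (∀ j i, 0 ≤ q j i) ∧ (∀ i, p' i = ∑ j, q j i) ∧
            (∀ i : {l : Fin n // l ≠ i₁}, i.val ≠ i₀ → p' i ≤ 1) ∧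
            p' ⟨i₀, hne⟩ ≤ 2 ∧
            (∀ j, ∑ i, q j i ≤ 1) ∧ ∀ j i, R j i.val → q j i = 0} := by
  ext p'
  constructor
  · rintro ⟨p, ⟨q, hq0, hpm, hp1, hrow, hR⟩, rfl⟩
    refine ⟨fun j l => if l.val = i₀ then q j i₀ + q j i₁ else q j l.val,
      ?_, ?_, ?_, ?_, ?_, ?_⟩
    · intro j l; dsimp only
      split
      · exact add_nonneg (hq0 j i₀) (hq0 j i₁)
      · exact hq0 j l.val
    · intro l; dsimp only
      split
      · rw [hpm i₀, hpm i₁, ← Finset.sum_add_distrib]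
      · exact hpm l.val
    · intro l hl; simp only [hl, if_false, Set.mem_setOf_eq]
      exact hp1 l.val
    · simp only [if_pos rfl, if_true, eq_self_iff_true]
      linarith [hp1 i₀, hp1 i₁]
    · intro j
      have key := sum_diff_single18
        (fun l : {l : Fin n // l ≠ i₁} => if l.val = i₀ then q j i₀ + q j i₁ else q j l.val)
        (fun l : {l : Fin n // l ≠ i₁} => q j l.val) ⟨i₀, hne⟩
        (fun x hx => by
          have : x.val ≠ i₀ := fun h => hx (Subtype.ext h)
          simp [this])
      simp only [if_pos rfl, if_true, eq_self_iff_true] at key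
      have hs := sum_split18 i₁ (q j)
      have := hrow j
      rw [key]
      linarith
    · intro j l hRl; dsimp only
      by_cases h : l.val = i₀
      · rw [if_pos h]
        rw [h] at hRl
        rw [hR j i₀ hRl, hR j i₁ ((hsame j).1 hRl)]; ring
      · rw [if_neg h]; exact hR j l.val hRl
  · rintro ⟨q', h0, hm, h1, h2, hrow, hR⟩
    set S := p' ⟨i₀, hne⟩ with hSdef
    set c : Fin k → ℝ := fun j => q' j ⟨i₀, hne⟩ with hcdef
    have hc0 : ∀ j, 0 ≤ c j := fun j => h0 j _
    have hSsum : S = ∑ j, c j := hm _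
    have hS0 : 0 ≤ S := hSsum ▸ Finset.sum_nonneg fun j _ => hc0 j
    set a : ℝ := min S 1 with hadef
    have ha0 : 0 ≤ a := le_min hS0 zero_le_one
    have haS : a ≤ S := min_le_left _ _
    have ha1 : a ≤ 1 := min_le_right _ _
    have hb1 : S - a ≤ 1 := by
      rcases le_total S 1 with h | h
      · rw [hadef, min_eq_left h]; linarith
      · rw [hadef, min_eq_right h]; linarith
    set s₀ : ℝ := if S = 0 then 0 else a / S with hs₀def
    set s₁ : ℝ := if S = 0 then 0 else (S - a) / S with hs₁def
    have hSpos : S ≠ 0 → 0 < S := fun h => lt_of_le_of_ne hS0 (Ne.symm h)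
    have hs₀0 : 0 ≤ s₀ := by
      rw [hs₀def]; split
      · exact le_refl 0
      · exact div_nonneg ha0 hS0
    have hs₁0 : 0 ≤ s₁ := by
      rw [hs₁def]; split
      · exact le_refl 0
      · exact div_nonneg (by linarith) hS0
    have hsum_scale : s₀ + s₁ ≤ 1 := by
      rw [hs₀def, hs₁def]; split
      · norm_num
      · rw [← add_div, div_le_one (hSpos (by assumption))]; linarith
    have haz : S = 0 → a = 0 := fun h => by
      rw [hadef, h]; exact min_eq_left zero_le_one
    have hs₀S : s₀ * S = a := by
      rw [hs₀def]; by_cases h : S = 0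
      · rw [if_pos h, zero_mul, haz h]
      · rw [if_neg h]; field_simp
    have hs₁S : s₁ * S = S - a := by
      rw [hs₁def]; by_cases h : S = 0
      · rw [if_pos h, zero_mul, h, haz h]; norm_num
      · rw [if_neg h]; field_simp
    classical
    set q : Fin k → Fin n → ℝ := fun j l =>
      if hl : l = i₁ then s₁ * c j
      else if l = i₀ then s₀ * c j else q' j ⟨l, hl⟩ with hqdef
    have hq_i₀ : ∀ j, q j i₀ = s₀ * c j := by
      intro j; rw [hqdef]; simp [hne]
    have hq_i₁ : ∀ j, q j i₁ = s₁ * c j := by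
      intro j; rw [hqdef]; simp
    have hq_other : ∀ j (l : Fin n) (hl : l ≠ i₁), l ≠ i₀ → q j l = q' j ⟨l, hl⟩ := by
      intro j l hl hl0; rw [hqdef]; simp [hl, hl0]
    set p : Fin n → ℝ := fun l => ∑ j, q j l with hpdef
    have hpi₀ : p i₀ = a := by
      rw [hpdef]; simp only
      calc ∑ j, q j i₀ = ∑ j, s₀ * c j := by simp [hq_i₀]
        _ = s₀ * S := by rw [hSsum, Finset.mul_sum]
        _ = a := hs₀S
    have hpi₁ : p i₁ = S - a := by
      rw [hpdef]; simp only
      calc ∑ j, q j i₁ = ∑ j, s₁ * c j := by simp [hq_i₁]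
        _ = s₁ * S := by rw [hSsum, Finset.mul_sum]
        _ = S - a := hs₁S
    have hp_other : ∀ (l : Fin n) (hl : l ≠ i₁), l ≠ i₀ → p l = p' ⟨l, hl⟩ := by
      intro l hl hl0
      rw [hpdef]; simp only
      rw [hm ⟨l, hl⟩]
      exact Finset.sum_congr rfl fun j _ => hq_other j l hl hl0
    refine ⟨p, ⟨q, ?_, fun i => rfl, ?_, ?_, ?_⟩, ?_⟩
    · intro j l; rw [hqdef]; dsimp only
      split
      · exact mul_nonneg hs₁0 (hc0 j)
      · split
        · exact mul_nonneg hs₀0 (hc0 j)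
        · exact h0 j _
    · intro l
      by_cases hl : l = i₁
      · rw [hl, hpi₁]; linarith
      · by_cases hl0 : l = i₀
        · rw [hl0, hpi₀]; exact ha1
        · rw [hp_other l hl hl0]
          exact h1 ⟨l, hl⟩ hl0
    · intro j
      have key := sum_diff_single18
        (fun l : {l : Fin n // l ≠ i₁} => q j l.val)
        (fun l : {l : Fin n // l ≠ i₁} => q' j l) ⟨i₀, hne⟩
        (fun x hx => by
          have hx0 : x.val ≠ i₀ := fun h => hx (Subtype.ext h)
          show q j x.val = q' j x
          rw [hq_other j x.val x.prop hx0])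
      simp only [hq_i₀ j] at key
      have hs := sum_split18 i₁ (q j)
      rw [hs, key, hq_i₁ j]
      have hrow' := hrow j
      have hq'eq : ∀ x : {l : Fin n // l ≠ i₁}, q' j ⟨x.val, x.prop⟩ = q' j x :=
        fun x => by congr
      have hc : 0 ≤ c j := hc0 j
      have : (s₀ + s₁) * c j ≤ c j := by
        nlinarith
      calc (∑ x : {l : Fin n // l ≠ i₁}, q' j x) + (s₀ * c j - q' j ⟨i₀, hne⟩) + s₁ * c j
          = (∑ x : {l : Fin n // l ≠ i₁}, q' j x) + ((s₀ + s₁) * c j - c j) := by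
            rw [hcdef]; ring
        _ ≤ ∑ x : {l : Fin n // l ≠ i₁}, q' j x := by linarith
        _ ≤ 1 := hrow'
    · intro j l hRl
      by_cases hl : l = i₁
      · rw [hl, hq_i₁]
        have : c j = 0 := hR j ⟨i₀, hne⟩ ((hsame j).2 (hl ▸ hRl))
        rw [this, mul_zero]
      · by_cases hl0 : l = i₀
        · rw [hl0, hq_i₀]
          have : c j = 0 := hR j ⟨i₀, hne⟩ (hl0 ▸ hRl)
          rw [this, mul_zero]
        · rw [hq_other j l hl hl0]
          exact hR j ⟨l, hl⟩ hRl
    · funext l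
      dsimp only
      by_cases hl : l.val = i₀
      · rw [if_pos hl, hpi₀, hpi₁]
        have : l = ⟨i₀, hne⟩ := Subtype.ext hl
        rw [this, ← hSdef]; ring
      · rw [if_neg hl, hp_other l.val l.prop hl]
end

section
/- Let c be a constraint Σ_{i ∈ index(T_S)} p_i ≤ |S| produced by iterating over a resource subset S with T_S = OnlyAuditedBy(S), and suppose c is not implied by (not a nonnegative combination of) constraints arising from proper sub-pairs (i.e., there is no proper subset T' ⊊ T_S audited only by a proper subset S' ⊊ S). Then in the intersection graph on merged targets (nodes = equivalence classes of targets under equal resource sets F(t), edges between nodes whose resource sets intersect), the nodes corresponding to targets in T_S form a connected induced subgraph. -/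
/-- Correctness claim of `CONSTRAINT_FIND`: if the constraint for resource subset `S`
(with target set `T_S = {t | F t ⊆ S}`) is not implied by any proper sub-pair, then
in the intersection graph (targets adjacent iff equal or intersecting resource sets)
the targets of `T_S` induce a connected subgraph. -/
theorem stmt19 {T : Type*} [Fintype T] {k : ℕ} (F : T → Finset (Fin k))
    (S : Finset (Fin k))
    (hne : {t : T | F t ⊆ S}.Nonempty)
    (hnonimpl : ¬ ∃ T' : Set T, T'.Nonempty ∧ T' ⊂ {t : T | F t ⊆ S} ∧
      ∃ S' : Finset (Fin k), S' ⊂ S ∧ ∀ t ∈ T', F t ⊆ S') :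
    ((SimpleGraph.fromRel fun t t' : T =>
        F t = F t' ∨ (F t ∩ F t').Nonempty).induce {t : T | F t ⊆ S}).Connected := by
  classical
  set s : Set T := {t : T | F t ⊆ S} with hs
  set H := ((SimpleGraph.fromRel fun t t' : T =>
      F t = F t' ∨ (F t ∩ F t').Nonempty).induce s) with hH
  have hnonempty : Nonempty s := hne.to_subtype
  -- helper: related vertices are reachable
  have reach : ∀ a b : s, (F a.1 = F b.1 ∨ (F a.1 ∩ F b.1).Nonempty) → H.Reachable a b := by
    intro a b hab
    by_cases h : a = b
    · subst h; exact SimpleGraph.Reachable.refl a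
    · have hadj : H.Adj a b := by
        refine ⟨fun hh => h (Subtype.ext hh), Or.inl hab⟩
      exact hadj.reachable
  rw [SimpleGraph.connected_iff]
  refine ⟨?_, hnonempty⟩
  by_contra hpre
  rw [SimpleGraph.Preconnected] at hpre
  push_neg at hpre
  obtain ⟨u, v, huv⟩ := hpre
  by_cases hout : ∃ t0 : s, ¬ H.Reachable u t0 ∧ (F t0.1).Nonempty
  · obtain ⟨t0, ht0, r0, hr0⟩ := hout
    set S' : Finset (Fin k) :=
      S.filter (fun r => ∀ t : s, r ∈ F t.1 → H.Reachable u t) with hS'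
    set T' : Set T := {t : T | ∃ h : F t ⊆ S, H.Reachable u ⟨t, h⟩} with hT'
    apply hnonimpl
    refine ⟨T', ⟨u.1, u.2, by simpa using SimpleGraph.Reachable.refl u⟩, ?_, S', ?_, ?_⟩
    · constructor
      · rintro t ⟨h, -⟩; exact h
      · intro hsub
        have := hsub v.2
        obtain ⟨h, hr⟩ := this
        exact huv (by simpa using hr)
    · constructor
      · exact Finset.filter_subset _ _
      · intro hsub
        have hr0S : r0 ∈ S := t0.2 hr0
        have := hsub hr0S
        rw [hS', Finset.mem_filter] at this
        exact ht0 (this.2 t0 hr0)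
    · rintro t ⟨h, hreach⟩ r hr
      rw [hS', Finset.mem_filter]
      refine ⟨h hr, fun t' hrt' => ?_⟩
      exact hreach.trans (reach ⟨t, h⟩ t' (Or.inr ⟨r, Finset.mem_inter.2 ⟨hr, hrt'⟩⟩))
  · push_neg at hout
    -- every unreachable vertex has empty resource set
    have hSne : S.Nonempty := by
      by_contra hSe
      rw [Finset.not_nonempty_iff_eq_empty] at hSe
      have hu : F u.1 = ∅ := Finset.subset_empty.1 (hSe ▸ u.2)
      have hv : F v.1 = ∅ := Finset.subset_empty.1 (hSe ▸ v.2)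
      exact huv (reach u v (Or.inl (hu.trans hv.symm)))
    set T' : Set T := {t : T | ∃ h : F t ⊆ S, ¬ H.Reachable u ⟨t, h⟩} with hT'
    apply hnonimpl
    refine ⟨T', ⟨v.1, v.2, by simpa using huv⟩, ?_, ∅, ?_, ?_⟩
    · constructor
      · rintro t ⟨h, -⟩; exact h
      · intro hsub
        obtain ⟨h, hr⟩ := hsub u.2
        exact hr (by simpa using SimpleGraph.Reachable.refl u)
    · exact Finset.empty_ssubset.2 hSne
    · rintro t ⟨h, hreach⟩
      have := hout ⟨t, h⟩ hreach
      change F t = ∅ at this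
      simp [this]
end
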